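/- arXiv:1202.6352 — 7 statements merged into one kernel-verified Lean document; each statement's English description precedes it below -/
import Mathlib

section
/- SAT-Skolemization, step 2: let A = A₁ ∧ ⋯ ∧ Aₘ where A₁, …, Aₘ are closed prenex formulas of first-order Gödel logic with △ and q is a fresh monadic predicate symbol. Then ∃x q(x) ∧ sk_q(A₁) ∧ ⋯ ∧ sk_q(Aₘ) is 1-satisfiable if and only if Hex(q,A) ∧ sk_q(A₁) ∧ ⋯ ∧ sk_q(Aₘ) is 1-satisfiable. -/
/-! Semantics of first-order Gödel logic with the projection operator `△` (G△),
with truth values in the complete lattice `[0,1]`. -/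

/-- The unit interval `[0,1]` is a complete lattice. -/
instance : Fact ((0:ℝ) ≤ 1) := ⟨zero_le_one⟩

/-- Gödel implication on `[0,1]`. -/
noncomputable def gimp (a b : unitInterval) : unitInterval := if a ≤ b then 1 else b

/-- The projection `△` on `[0,1]`. -/
noncomputable def gdelta (a : unitInterval) : unitInterval := if a = 1 then 1 else 0

/-- A first-order signature: function symbols and predicate symbols with arities. -/
structure Signature : Type 1 where
  Func : Type
  fArity : Func → ℕ
  Pred : Type
  pArity : Pred → ℕ

/-- Terms over a signature; variables are indexed by natural numbers. -/
inductive Term (S : Signature) : Type where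
  | var (n : ℕ) : Term S
  | func (f : S.Func) (args : Fin (S.fArity f) → Term S) : Term S

namespace Term

variable {S : Signature}

/-- The set of variables occurring in a term. -/
def vars : Term S → Set ℕ
  | .var n => {n}
  | .func _ args => ⋃ i, (args i).vars

/-- The set of function symbols (including constants) occurring in a term. -/
def funcsIn : Term S → Set S.Func
  | .var _ => ∅
  | .func f args => insert f (⋃ i, (args i).funcsIn)

/-- A term is ground if it contains no variables. -/
def isGround : Term S → Prop
  | .var _ => False
  | .func _ args => ∀ i, (args i).isGround

/-- Simultaneous substitution of terms for variables in a term. -/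
def subst (σ : ℕ → Term S) : Term S → Term S
  | .var n => σ n
  | .func f args => .func f (fun i => (args i).subst σ)

end Term

/-- Formulas of first-order Gödel logic with `△`. -/
inductive Formula (S : Signature) : Type where
  | bot : Formula S
  | top : Formula S
  | atom (p : S.Pred) (args : Fin (S.pArity p) → Term S) : Formula S
  | and (A B : Formula S) : Formula S
  | or (A B : Formula S) : Formula S
  | imp (A B : Formula S) : Formula S
  | delta (A : Formula S) : Formula S
  | all (x : ℕ) (A : Formula S) : Formula S
  | ex (x : ℕ) (A : Formula S) : Formula S

namespace Formula

variable {S : Signature}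

/-- Gödel negation `¬A := A → ⊥`. -/
def neg (A : Formula S) : Formula S := A.imp .bot

/-- The set of free variables of a formula. -/
def freeVars : Formula S → Set ℕ
  | .bot => ∅
  | .top => ∅
  | .atom _ args => ⋃ i, (args i).vars
  | .and A B => A.freeVars ∪ B.freeVars
  | .or A B => A.freeVars ∪ B.freeVars
  | .imp A B => A.freeVars ∪ B.freeVars
  | .delta A => A.freeVars
  | .all x A => A.freeVars \ {x}
  | .ex x A => A.freeVars \ {x}

/-- The set of function symbols occurring in a formula. -/
def funcsIn : Formula S → Set S.Func
  | .bot => ∅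
  | .top => ∅
  | .atom _ args => ⋃ i, (args i).funcsIn
  | .and A B => A.funcsIn ∪ B.funcsIn
  | .or A B => A.funcsIn ∪ B.funcsIn
  | .imp A B => A.funcsIn ∪ B.funcsIn
  | .delta A => A.funcsIn
  | .all _ A => A.funcsIn
  | .ex _ A => A.funcsIn

/-- The set of predicate symbols occurring in a formula. -/
def predsIn : Formula S → Set S.Pred
  | .bot => ∅
  | .top => ∅
  | .atom p _ => {p}
  | .and A B => A.predsIn ∪ B.predsIn
  | .or A B => A.predsIn ∪ B.predsIn
  | .imp A B => A.predsIn ∪ B.predsIn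
  | .delta A => A.predsIn
  | .all _ A => A.predsIn
  | .ex _ A => A.predsIn

/-- A formula is quantifier free. -/
def isQF : Formula S → Prop
  | .bot => True
  | .top => True
  | .atom _ _ => True
  | .and A B => A.isQF ∧ B.isQF
  | .or A B => A.isQF ∧ B.isQF
  | .imp A B => A.isQF ∧ B.isQF
  | .delta A => A.isQF
  | .all _ _ => False
  | .ex _ _ => False

/-- Simultaneous substitution of terms for the free variables of a formula
(bound variables are left untouched). -/
def subst (σ : ℕ → Term S) : Formula S → Formula S
  | .bot => .bot
  | .top => .top
  | .atom p args => .atom p (fun i => (args i).subst σ)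
  | .and A B => .and (A.subst σ) (B.subst σ)
  | .or A B => .or (A.subst σ) (B.subst σ)
  | .imp A B => .imp (A.subst σ) (B.subst σ)
  | .delta A => .delta (A.subst σ)
  | .all x A => .all x (A.subst (Function.update σ x (.var x)))
  | .ex x A => .ex x (A.subst (Function.update σ x (.var x)))

/-- Substitution of a single term `t` for the variable `x`. -/
def subst1 (x : ℕ) (t : Term S) (A : Formula S) : Formula S :=
  A.subst (fun n => if n = x then t else .var n)

end Formula

/-- An interpretation: a nonempty domain, interpretations of the function symbols,
and `[0,1]`-valued interpretations of the predicate symbols. -/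
structure Interp (S : Signature) : Type 1 where
  D : Type
  dNe : Nonempty D
  fI : ∀ f : S.Func, (Fin (S.fArity f) → D) → D
  pI : ∀ p : S.Pred, (Fin (S.pArity p) → D) → unitInterval

attribute [instance] Interp.dNe

/-- Evaluation of a term in an interpretation under a variable assignment. -/
def Term.eval {S : Signature} (I : Interp S) (μ : ℕ → I.D) : Term S → I.D
  | .var n => μ n
  | .func f args => I.fI f (fun i => (args i).eval I μ)

/-- The Gödel value `‖A‖ ∈ [0,1]` of a formula in an interpretation under a variable
assignment; `∀` is interpreted by the infimum and `∃` by the supremum. -/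
noncomputable def Formula.val {S : Signature} (I : Interp S) (μ : ℕ → I.D) :
    Formula S → unitInterval
  | .bot => 0
  | .top => 1
  | .atom p args => I.pI p (fun i => (args i).eval I μ)
  | .and A B => min (A.val I μ) (B.val I μ)
  | .or A B => max (A.val I μ) (B.val I μ)
  | .imp A B => gimp (A.val I μ) (B.val I μ)
  | .delta A => gdelta (A.val I μ)
  | .all x A => ⨅ d : I.D, A.val I (Function.update μ x d)
  | .ex x A => ⨆ d : I.D, A.val I (Function.update μ x d)

/-- A formula is valid if it takes value `1` in every interpretation, under every
variable assignment. -/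
def valid {S : Signature} (A : Formula S) : Prop :=
  ∀ (I : Interp S) (μ : ℕ → I.D), A.val I μ = 1

/-- A formula is 1-satisfiable if it takes value `1` in some interpretation. -/
def sat1 {S : Signature} (A : Formula S) : Prop :=
  ∃ (I : Interp S) (μ : ℕ → I.D), A.val I μ = 1

/-- `exCloseList [x₁,…,xₙ] P = ∃x₁ … ∃xₙ P`. -/
def exCloseList {S : Signature} : List ℕ → Formula S → Formula S
  | [], P => P
  | x :: xs, P => .ex x (exCloseList xs P)

/-- `allCloseList [x₁,…,xₙ] P = ∀x₁ … ∀xₙ P`. -/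
def allCloseList {S : Signature} : List ℕ → Formula S → Formula S
  | [], P => P
  | x :: xs, P => .all x (allCloseList xs P)

/-- `buildPrenex [Q₁,…,Qₙ] i P = Q₁ zᵢ Q₂ z_{i+1} … Qₙ z_{i+n-1} P`, where `true`
codes `∀` and `false` codes `∃`; the bound variables are the indices `i, i+1, …`. -/
def buildPrenex {S : Signature} : List Bool → ℕ → Formula S → Formula S
  | [], _, P => P
  | b :: rest, i, P =>
      if b then .all i (buildPrenex rest (i + 1) P)
      else .ex i (buildPrenex rest (i + 1) P)

/-- The positions (= variables) of the existential quantifiers in a prenex prefix. -/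
def exPos (pref : List Bool) : List ℕ :=
  (List.range pref.length).filter (fun i => pref.getD i true = false)

/-- The positions (= variables) of the universal quantifiers in a prenex prefix. -/
def univPos (pref : List Bool) : List ℕ :=
  (List.range pref.length).filter (fun i => pref.getD i false = true)

/-- `bigOr A [B₁,…,Bₙ] = A ∨ B₁ ∨ … ∨ Bₙ`. -/
def bigOr {S : Signature} : Formula S → List (Formula S) → Formula S
  | A, [] => A
  | A, B :: rest => .or A (bigOr B rest)

/-- `bigAnd A [B₁,…,Bₙ] = A ∧ B₁ ∧ … ∧ Bₙ`. -/
def bigAnd {S : Signature} : Formula S → List (Formula S) → Formula S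
  | A, [] => A
  | A, B :: rest => .and A (bigAnd B rest)

/-- The SAT-Skolem substitution (Definition of `Ψ_q`): each existentially quantified
variable `i` is replaced by the Skolem term `f i (zᵢ, z₀, …, z_{i-1})` (the guard
variable `zᵢ` followed by the free variables at that point); universal variables are
kept. -/
def skSubstSatQ {S : Signature} (pref : List Bool) (skf : ℕ → S.Func) : ℕ → Term S :=
  fun i =>
    if pref.getD i true = false then
      Term.func (skf i)
        (fun j => Term.var (if (j : ℕ) = 0 then i else (j : ℕ) - 1))
    else Term.var i

/-- The atom `q(t)` for a monadic predicate symbol `q`. -/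
def qAtom {S : Signature} (q : S.Pred) (t : Term S) : Formula S :=
  .atom q (fun _ => t)

/-- `guards q [i₁,…,iₙ] B = q(z_{i₁}) → (q(z_{i₂}) → … (q(z_{iₙ}) → B))`:
the guards `q(x) → ·` produced by `Ψ_q` at the existential positions. -/
def guards {S : Signature} (q : S.Pred) : List ℕ → Formula S → Formula S
  | [], B => B
  | i :: xs, B => .imp (qAtom q (.var i)) (guards q xs B)

/-- The SAT-Skolem form `sk_q(A) = ∀x̄ △(Ψ_q(A)⁻)` of the prenex formula with prefix
`pref` and quantifier-free matrix `P`. -/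
def skq {S : Signature} (q : S.Pred) (skf : ℕ → S.Func) (pref : List Bool)
    (P : Formula S) : Formula S :=
  allCloseList (List.range pref.length)
    (.delta (guards q (exPos pref) (P.subst (skSubstSatQ pref skf))))

/-- The formula `∃x q(x)`. -/
def exQ {S : Signature} (q : S.Pred) : Formula S := .ex 0 (qAtom q (.var 0))

/-- `A ⊴ B := △(A → B)`. -/
def dleF {S : Signature} (A B : Formula S) : Formula S := .delta (A.imp B)

/-- `A ◁ B := ¬△(B → A)`. -/
def dlF {S : Signature} (A B : Formula S) : Formula S := (Formula.delta (B.imp A)).imp .bot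

/-- The `Hex` conjunct for a predicate symbol `p`:
`∀ȳ (⊤ ⊴ p(ȳ) ∨ p(ȳ) ◁ q(f_p(ȳ)))`. -/
def hexConj {S : Signature} (q : S.Pred) (fp : S.Pred → S.Func) (p : S.Pred) :
    Formula S :=
  allCloseList (List.range (S.pArity p))
    (Formula.or
      (dleF .top (.atom p (fun k => .var (k : ℕ))))
      (dlF (.atom p (fun k => .var (k : ℕ)))
        (qAtom q (.func (fp p) (fun k => .var (k : ℕ))))))

/-- Conjunction of a list of formulas (`⊤` for the empty list). -/
def bigAndL {S : Signature} : List (Formula S) → Formula S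
  | [] => .top
  | [A] => A
  | A :: rest => .and A (bigAndL rest)

/-- `Hex(q,A)`: the conjunction of the `Hex` conjuncts over the predicate symbols
`p₁,…,p_k` occurring in `sk_q(A)`. -/
def hexFormula {S : Signature} (q : S.Pred) (fp : S.Pred → S.Func)
    (ps : List S.Pred) : Formula S :=
  bigAndL (ps.map (hexConj q fp))

section Lemmas

open Classical

lemma u_le_one (a : unitInterval) : a ≤ 1 := unitInterval.le_one a

lemma min_eq_one_u {a b : unitInterval} : min a b = 1 ↔ a = 1 ∧ b = 1 := by
  constructor
  · intro h
    constructor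
    · exact le_antisymm (u_le_one a) (h ▸ min_le_left a b)
    · exact le_antisymm (u_le_one b) (h ▸ min_le_right a b)
  · rintro ⟨rfl, rfl⟩; exact min_self 1

lemma max_eq_one_u {a b : unitInterval} : max a b = 1 ↔ a = 1 ∨ b = 1 := by
  constructor
  · intro h
    rcases max_choice a b with h' | h' <;> [left; right] <;> rw [← h', h]
  · rintro (rfl | rfl)
    · exact max_eq_left (u_le_one b)
    · exact max_eq_right (u_le_one a)

lemma gdelta_eq_one {a : unitInterval} : gdelta a = 1 ↔ a = 1 := by
  unfold gdelta
  split
  · simp [*]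
  · simp only [iff_false, *]
    intro h
    exact one_ne_zero (by exact_mod_cast congrArg Subtype.val h.symm)

lemma gimp_eq_one {a b : unitInterval} : gimp a b = 1 ↔ a ≤ b := by
  unfold gimp
  split
  · simp [*]
  · simp only [iff_false, *]
    intro h
    exact ‹¬ a ≤ b› (h ▸ u_le_one a)

lemma iInf_eq_one_u {ι : Type} [Nonempty ι] {f : ι → unitInterval} :
    (⨅ i, f i) = 1 ↔ ∀ i, f i = 1 := by
  constructor
  · intro h i
    exact le_antisymm (u_le_one _) (h ▸ iInf_le f i)
  · intro h
    refine le_antisymm (u_le_one _) (le_iInf fun i => (h i).ge)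

lemma val_all_eq_one {S : Signature} {I : Interp S} {μ : ℕ → I.D} {x : ℕ}
    {A : Formula S} : (Formula.all x A).val I μ = 1 ↔
      ∀ d : I.D, A.val I (Function.update μ x d) = 1 := by
  rw [Formula.val]; exact iInf_eq_one_u

/-- Term evaluation only depends on the function symbols occurring in the term
and on the values of the assignment at its variables. -/
lemma Term.eval_congr {S : Signature} (I : Interp S) (F : ∀ f : S.Func, (Fin (S.fArity f) → I.D) → I.D)
    (Q : ∀ p : S.Pred, (Fin (S.pArity p) → I.D) → unitInterval)
    (μ ν : ℕ → I.D) (t : Term S)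
    (hf : ∀ f ∈ t.funcsIn, F f = I.fI f) (hv : ∀ n ∈ t.vars, μ n = ν n) :
    t.eval ⟨I.D, I.dNe, F, Q⟩ μ = t.eval I ν := by
  induction t with
  | var n => exact hv n rfl
  | func f args ih =>
    show F f _ = I.fI f _
    rw [hf f (by simp [Term.funcsIn])]
    congr 1
    funext i
    exact ih i (fun g hg => hf g (by simp [Term.funcsIn]; exact Or.inr ⟨i, hg⟩))
      (fun n hn => hv n (by simp [Term.vars]; exact ⟨i, hn⟩))

/-- Formula values only depend on the occurring function and predicate symbols
and on the assignment at the free variables. -/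
lemma Formula.val_congr {S : Signature} (I : Interp S)
    (F : ∀ f : S.Func, (Fin (S.fArity f) → I.D) → I.D)
    (Q : ∀ p : S.Pred, (Fin (S.pArity p) → I.D) → unitInterval)
    (A : Formula S) (μ ν : ℕ → I.D)
    (hf : ∀ f ∈ A.funcsIn, F f = I.fI f)
    (hp : ∀ p ∈ A.predsIn, Q p = I.pI p)
    (hv : ∀ n ∈ A.freeVars, μ n = ν n) :
    A.val ⟨I.D, I.dNe, F, Q⟩ μ = A.val I ν := by
  induction A generalizing μ ν with
  | bot => rfl
  | top => rfl
  | atom p args =>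
    show Q p _ = I.pI p _
    rw [hp p (by simp [Formula.predsIn])]
    congr 1
    funext i
    exact Term.eval_congr I F Q μ ν (args i)
      (fun g hg => hf g (by simp [Formula.funcsIn]; exact ⟨i, hg⟩))
      (fun n hn => hv n (by simp [Formula.freeVars]; exact ⟨i, hn⟩))
  | and A B ihA ihB =>
    show min _ _ = min _ _
    rw [ihA μ ν (fun g hg => hf g (Or.inl hg)) (fun p hp' => hp p (Or.inl hp'))
        (fun n hn => hv n (Or.inl hn)),
      ihB μ ν (fun g hg => hf g (Or.inr hg)) (fun p hp' => hp p (Or.inr hp'))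
        (fun n hn => hv n (Or.inr hn))]
  | or A B ihA ihB =>
    show max _ _ = max _ _
    rw [ihA μ ν (fun g hg => hf g (Or.inl hg)) (fun p hp' => hp p (Or.inl hp'))
        (fun n hn => hv n (Or.inl hn)),
      ihB μ ν (fun g hg => hf g (Or.inr hg)) (fun p hp' => hp p (Or.inr hp'))
        (fun n hn => hv n (Or.inr hn))]
  | imp A B ihA ihB =>
    show gimp _ _ = gimp _ _
    rw [ihA μ ν (fun g hg => hf g (Or.inl hg)) (fun p hp' => hp p (Or.inl hp'))
        (fun n hn => hv n (Or.inl hn)),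
      ihB μ ν (fun g hg => hf g (Or.inr hg)) (fun p hp' => hp p (Or.inr hp'))
        (fun n hn => hv n (Or.inr hn))]
  | delta A ih =>
    show gdelta _ = gdelta _
    rw [ih μ ν hf hp hv]
  | all x A ih =>
    show ⨅ d : I.D, _ = ⨅ d : I.D, _
    refine iInf_congr fun d => ih _ _ hf hp fun n hn => ?_
    rcases eq_or_ne n x with rfl | hne
    · simp
    · simp only [Function.update_of_ne hne]
      exact hv n ⟨hn, hne⟩
  | ex x A ih =>
    show ⨆ d : I.D, _ = ⨆ d : I.D, _
    refine iSup_congr fun d => ih _ _ hf hp fun n hn => ?_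
    rcases eq_or_ne n x with rfl | hne
    · simp
    · simp only [Function.update_of_ne hne]
      exact hv n ⟨hn, hne⟩

end Lemmas

section Lemmas2

lemma Formula.predsIn_subst {S : Signature} (A : Formula S) (σ : ℕ → Term S) :
    (A.subst σ).predsIn = A.predsIn := by
  induction A generalizing σ with
  | bot => rfl
  | top => rfl
  | atom p args => rfl
  | and A B ihA ihB => show _ ∪ _ = _ ∪ _; rw [ihA, ihB]
  | or A B ihA ihB => show _ ∪ _ = _ ∪ _; rw [ihA, ihB]
  | imp A B ihA ihB => show _ ∪ _ = _ ∪ _; rw [ihA, ihB]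
  | delta A ih => exact ih σ
  | all x A ih => exact ih _
  | ex x A ih => exact ih _

lemma Formula.isQF_subst {S : Signature} (A : Formula S) (σ : ℕ → Term S)
    (h : A.isQF) : (A.subst σ).isQF := by
  induction A generalizing σ with
  | bot => trivial
  | top => trivial
  | atom p args => trivial
  | and A B ihA ihB => exact ⟨ihA σ h.1, ihB σ h.2⟩
  | or A B ihA ihB => exact ⟨ihA σ h.1, ihB σ h.2⟩
  | imp A B ihA ihB => exact ⟨ihA σ h.1, ihB σ h.2⟩
  | delta A ih => exact ih σ h
  | all x A ih => exact h.elim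
  | ex x A ih => exact h.elim

lemma Term.funcsIn_subst {S : Signature} (t : Term S) (σ : ℕ → Term S)
    (G : Set S.Func) (ht : t.funcsIn ⊆ G) (hσ : ∀ n, (σ n).funcsIn ⊆ G) :
    (t.subst σ).funcsIn ⊆ G := by
  induction t with
  | var n => exact hσ n
  | func f args ih =>
    intro g hg
    rcases hg with rfl | hg
    · exact ht (by simp [Term.funcsIn])
    · simp only [Set.mem_iUnion] at hg
      obtain ⟨i, hi⟩ := hg
      exact ih i (fun g' hg' => ht (by simp [Term.funcsIn]; exact Or.inr ⟨i, hg'⟩)) hi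

lemma Formula.funcsIn_subst {S : Signature} (A : Formula S) (σ : ℕ → Term S)
    (G : Set S.Func) (hA : A.funcsIn ⊆ G) (hσ : ∀ n, (σ n).funcsIn ⊆ G) :
    (A.subst σ).funcsIn ⊆ G := by
  induction A generalizing σ with
  | bot => exact hA
  | top => exact hA
  | atom p args =>
    intro g hg
    simp only [Formula.subst, Formula.funcsIn, Set.mem_iUnion] at hg
    obtain ⟨i, hi⟩ := hg
    exact Term.funcsIn_subst (args i) σ G
      (fun g' hg' => hA (by simp [Formula.funcsIn]; exact ⟨i, hg'⟩)) hσ hi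
  | and A B ihA ihB =>
    exact Set.union_subset (ihA σ (fun g hg => hA (Or.inl hg)) hσ)
      (ihB σ (fun g hg => hA (Or.inr hg)) hσ)
  | or A B ihA ihB =>
    exact Set.union_subset (ihA σ (fun g hg => hA (Or.inl hg)) hσ)
      (ihB σ (fun g hg => hA (Or.inr hg)) hσ)
  | imp A B ihA ihB =>
    exact Set.union_subset (ihA σ (fun g hg => hA (Or.inl hg)) hσ)
      (ihB σ (fun g hg => hA (Or.inr hg)) hσ)
  | delta A ih => exact ih σ hA hσ
  | all x A ih =>
    refine ih _ hA fun n => ?_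
    rcases eq_or_ne n x with rfl | hne
    · simp [Term.funcsIn]
    · simpa [Function.update_of_ne hne] using hσ n
  | ex x A ih =>
    refine ih _ hA fun n => ?_
    rcases eq_or_ne n x with rfl | hne
    · simp [Term.funcsIn]
    · simpa [Function.update_of_ne hne] using hσ n

lemma predsIn_allCloseList {S : Signature} (xs : List ℕ) (A : Formula S) :
    (allCloseList xs A).predsIn = A.predsIn := by
  induction xs with
  | nil => rfl
  | cons x xs ih => exact ih

lemma funcsIn_allCloseList {S : Signature} (xs : List ℕ) (A : Formula S) :
    (allCloseList xs A).funcsIn = A.funcsIn := by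
  induction xs with
  | nil => rfl
  | cons x xs ih => exact ih

lemma predsIn_guards {S : Signature} (q : S.Pred) (xs : List ℕ) (B : Formula S) :
    (guards q xs B).predsIn ⊆ insert q B.predsIn := by
  induction xs with
  | nil => exact fun p hp => Or.inr hp
  | cons x xs ih =>
    intro p hp
    rcases hp with hp | hp
    · exact Or.inl hp
    · exact ih hp

lemma funcsIn_guards {S : Signature} (q : S.Pred) (xs : List ℕ) (B : Formula S) :
    (guards q xs B).funcsIn ⊆ B.funcsIn := by
  induction xs with
  | nil => exact fun g hg => hg
  | cons x xs ih =>
    intro g hg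
    rcases hg with hg | hg
    · simp only [qAtom, Formula.funcsIn, Set.mem_iUnion] at hg
      obtain ⟨i, hi⟩ := hg
      exact hi.elim
    · exact ih hg

lemma isQF_guards {S : Signature} (q : S.Pred) (xs : List ℕ) (B : Formula S)
    (h : B.isQF) : (guards q xs B).isQF := by
  induction xs with
  | nil => exact h
  | cons x xs ih => exact ⟨trivial, ih⟩

lemma mem_exPos {pref : List Bool} {j : ℕ} :
    j ∈ exPos pref ↔ pref.getD j true = false := by
  simp only [exPos, List.mem_filter, List.mem_range, decide_eq_true_eq]
  constructor
  · exact fun h => h.2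
  · intro h
    refine ⟨?_, h⟩
    by_contra hj
    rw [List.getD_eq_default pref true (le_of_not_gt hj)] at h
    simp at h

/-- The predicate symbols of `skq` are among `q` and those of the matrix. -/
lemma predsIn_skq {S : Signature} (q : S.Pred) (skf : ℕ → S.Func)
    (pref : List Bool) (P : Formula S) :
    (skq q skf pref P).predsIn ⊆ insert q P.predsIn := by
  unfold skq
  rw [predsIn_allCloseList]
  show (guards q (exPos pref) (P.subst _)).predsIn ⊆ _
  refine (predsIn_guards q _ _).trans ?_
  rw [Formula.predsIn_subst]

/-- The function symbols of `skq` are among those of the matrix and the Skolem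
functions at existential positions. -/
lemma funcsIn_skq {S : Signature} (q : S.Pred) (skf : ℕ → S.Func)
    (pref : List Bool) (P : Formula S) :
    (skq q skf pref P).funcsIn ⊆
      P.funcsIn ∪ {g | ∃ j ∈ exPos pref, g = skf j} := by
  unfold skq
  rw [funcsIn_allCloseList]
  show (guards q (exPos pref) (P.subst _)).funcsIn ⊆ _
  refine (funcsIn_guards q _ _).trans ?_
  refine Formula.funcsIn_subst P _ _ (fun g hg => Or.inl hg) fun n => ?_
  unfold skSubstSatQ
  split
  · intro g hg
    rcases hg with rfl | hg
    · exact Or.inr ⟨n, mem_exPos.mpr (by assumption), rfl⟩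
    · simp only [Set.mem_iUnion] at hg
      obtain ⟨i, hi⟩ := hg
      exact hi.elim
  · intro g hg
    exact hg.elim

end Lemmas2

section Lemmas3

/-- The value of a universal closure is `1` iff the matrix takes value `1` under
all modifications of the assignment at the closed variables. -/
lemma val_allCloseList_eq_one {S : Signature} (I : Interp S) (xs : List ℕ)
    (B : Formula S) (μ : ℕ → I.D) :
    (allCloseList xs B).val I μ = 1 ↔
      ∀ μ' : ℕ → I.D, (∀ n ∉ xs, μ' n = μ n) → B.val I μ' = 1 := by
  induction xs generalizing μ with
  | nil =>
    constructor
    · intro h μ' hμ'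
      have : μ' = μ := funext fun n => hμ' n List.not_mem_nil
      rwa [this]
    · intro h
      exact h μ fun n _ => rfl
  | cons x xs ih =>
    show (Formula.all x _).val I μ = 1 ↔ _
    rw [val_all_eq_one]
    constructor
    · intro h μ' hμ'
      refine (ih (Function.update μ x (μ' x))).mp (h (μ' x)) μ' fun n hn => ?_
      rcases eq_or_ne n x with rfl | hne
      · simp
      · rw [Function.update_of_ne hne]
        exact hμ' n (by simp [hn, hne])
    · intro h d
      refine (ih (Function.update μ x d)).mpr fun μ' hμ' => ?_
      refine h μ' fun n hn => ?_
      simp only [List.mem_cons, not_or] at hn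
      rw [hμ' n hn.2, Function.update_of_ne hn.1]

/-- The value of a quantifier-free formula commutes with composing the predicate
interpretations by a map `g` strictly monotone on a set `V` of truth values
containing `0`, `1`, and all relevant atom values. -/
lemma Formula.val_comp {S : Signature} (I : Interp S)
    (Q : ∀ p : S.Pred, (Fin (S.pArity p) → I.D) → unitInterval)
    (g : unitInterval → unitInterval) (V : Set unitInterval)
    (h0 : (0 : unitInterval) ∈ V) (h1 : (1 : unitInterval) ∈ V)
    (hg0 : g 0 = 0) (hg1 : g 1 = 1)
    (hmono : ∀ a ∈ V, ∀ b ∈ V, a < b → g a < g b)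
    (A : Formula S) (hA : A.isQF) (μ : ℕ → I.D)
    (hatom : ∀ p ∈ A.predsIn, ∀ args, Q p args = g (I.pI p args) ∧ I.pI p args ∈ V) :
    A.val ⟨I.D, I.dNe, I.fI, Q⟩ μ = g (A.val I μ) ∧ A.val I μ ∈ V := by
  have hle : ∀ a ∈ V, ∀ b ∈ V, a ≤ b → g a ≤ g b := by
    intro a ha b hb hab
    rcases eq_or_lt_of_le hab with rfl | h
    · exact le_refl _
    · exact (hmono a ha b hb h).le
  have hgone : ∀ a ∈ V, (g a = 1 ↔ a = 1) := by
    intro a ha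
    constructor
    · intro h
      by_contra hne
      have : a < 1 := lt_of_le_of_ne (u_le_one a) hne
      have := hmono a ha 1 h1 this
      rw [hg1, h] at this
      exact lt_irrefl _ this
    · rintro rfl; exact hg1
  induction A with
  | bot => exact ⟨hg0.symm, h0⟩
  | top => exact ⟨hg1.symm, h1⟩
  | atom p args =>
    have heq : (fun i => (args i).eval ⟨I.D, I.dNe, I.fI, Q⟩ μ) = fun i => (args i).eval I μ := by
      funext i
      exact Term.eval_congr I I.fI Q μ μ (args i) (fun _ _ => rfl) (fun _ _ => rfl)
    have h := hatom p (by simp [Formula.predsIn]) (fun i => (args i).eval I μ)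
    exact ⟨by show Q p _ = _; rw [heq]; exact h.1, h.2⟩
  | and A B ihA ihB =>
    obtain ⟨hA1, hA2⟩ := ihA hA.1 (fun p hp => hatom p (Or.inl hp))
    obtain ⟨hB1, hB2⟩ := ihB hA.2 (fun p hp => hatom p (Or.inr hp))
    show min _ _ = g (min _ _) ∧ min _ _ ∈ V
    constructor
    · rw [hA1, hB1]
      rcases le_total (A.val I μ) (B.val I μ) with h | h
      · rw [min_eq_left h, min_eq_left (hle _ hA2 _ hB2 h)]
      · rw [min_eq_right h, min_eq_right (hle _ hB2 _ hA2 h)]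
    · rcases min_choice (A.val I μ) (B.val I μ) with h | h <;> rw [h] <;> assumption
  | or A B ihA ihB =>
    obtain ⟨hA1, hA2⟩ := ihA hA.1 (fun p hp => hatom p (Or.inl hp))
    obtain ⟨hB1, hB2⟩ := ihB hA.2 (fun p hp => hatom p (Or.inr hp))
    show max _ _ = g (max _ _) ∧ max _ _ ∈ V
    constructor
    · rw [hA1, hB1]
      rcases le_total (A.val I μ) (B.val I μ) with h | h
      · rw [max_eq_right h, max_eq_right (hle _ hA2 _ hB2 h)]
      · rw [max_eq_left h, max_eq_left (hle _ hB2 _ hA2 h)]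
    · rcases max_choice (A.val I μ) (B.val I μ) with h | h <;> rw [h] <;> assumption
  | imp A B ihA ihB =>
    obtain ⟨hA1, hA2⟩ := ihA hA.1 (fun p hp => hatom p (Or.inl hp))
    obtain ⟨hB1, hB2⟩ := ihB hA.2 (fun p hp => hatom p (Or.inr hp))
    show gimp _ _ = g (gimp _ _) ∧ gimp _ _ ∈ V
    rw [hA1, hB1]
    unfold gimp
    rcases le_or_gt (A.val I μ) (B.val I μ) with h | h
    · rw [if_pos h, if_pos (hle _ hA2 _ hB2 h), hg1]
      exact ⟨rfl, h1⟩
    · rw [if_neg (not_le.mpr h), if_neg (not_le.mpr (hmono _ hB2 _ hA2 h))]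
      exact ⟨rfl, hB2⟩
  | delta A ih =>
    obtain ⟨hA1, hA2⟩ := ih hA (fun p hp => hatom p hp)
    show gdelta _ = g (gdelta _) ∧ gdelta _ ∈ V
    rw [hA1]
    unfold gdelta
    rcases eq_or_ne (A.val I μ) 1 with h | h
    · rw [if_pos h, if_pos ((hgone _ hA2).mpr h), hg1]
      exact ⟨rfl, h1⟩
    · rw [if_neg h, if_neg (fun hc => h ((hgone _ hA2).mp hc)), hg0]
      exact ⟨rfl, h0⟩
  | all x A ih => exact hA.elim
  | ex x A ih => exact hA.elim

/-- Value of `bigAnd` is `1` iff all conjuncts have value `1`. -/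
lemma val_bigAnd_eq_one {S : Signature} (I : Interp S) (μ : ℕ → I.D)
    (A : Formula S) (l : List (Formula S)) :
    (bigAnd A l).val I μ = 1 ↔ A.val I μ = 1 ∧ ∀ B ∈ l, B.val I μ = 1 := by
  induction l generalizing A with
  | nil => simp [bigAnd]
  | cons B rest ih =>
    show (Formula.and A (bigAnd B rest)).val I μ = 1 ↔ _
    rw [Formula.val]
    rw [min_eq_one_u, ih]
    simp only [List.mem_cons]
    constructor
    · rintro ⟨h1, h2, h3⟩
      exact ⟨h1, fun C hC => hC.elim (fun h => h ▸ h2) (h3 C)⟩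
    · rintro ⟨h1, h2⟩
      exact ⟨h1, h2 B (Or.inl rfl), fun C hC => h2 C (Or.inr hC)⟩

/-- Value of `bigAndL` is `1` iff all conjuncts have value `1`. -/
lemma val_bigAndL_eq_one {S : Signature} (I : Interp S) (μ : ℕ → I.D)
    (l : List (Formula S)) :
    (bigAndL l).val I μ = 1 ↔ ∀ B ∈ l, B.val I μ = 1 := by
  induction l with
  | nil => simp [bigAndL]; rfl
  | cons A rest ih =>
    cases rest with
    | nil => simp [bigAndL]
    | cons B rest' =>
      show (Formula.and A (bigAndL (B :: rest'))).val I μ = 1 ↔ _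
      rw [Formula.val, min_eq_one_u, ih]
      simp only [List.mem_cons]
      constructor
      · rintro ⟨h1, h2⟩
        exact fun C hC => hC.elim (fun h => h ▸ h1) (h2 C)
      · intro h
        exact ⟨h A (Or.inl rfl), fun C hC => h C (Or.inr hC)⟩

end Lemmas3

section Lemmas4

lemma u_nonneg (a : unitInterval) : (0 : unitInterval) ≤ a :=
  Subtype.coe_le_coe.mp (by exact_mod_cast a.2.1)

lemma le_zero_iff_u {a : unitInterval} : a ≤ 0 ↔ a = 0 :=
  ⟨fun h => le_antisymm h (u_nonneg a), fun h => h.le⟩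

lemma one_ne_zero_u : (1 : unitInterval) ≠ 0 := fun h => by
  simp [Subtype.ext_iff] at h

lemma gdelta_eq_zero {a : unitInterval} : gdelta a = 0 ↔ a ≠ 1 := by
  rcases eq_or_ne a 1 with rfl | h
  · simp [gdelta, one_ne_zero_u]
  · simp [gdelta, h]

/-- Value of `∃x q(x)`. -/
lemma val_exQ {S : Signature} (q : S.Pred) (I : Interp S) (μ : ℕ → I.D) :
    (exQ q).val I μ = ⨆ d : I.D, I.pI q (fun _ => d) := by
  show (⨆ d : I.D, (qAtom q (.var 0)).val I (Function.update μ 0 d)) = _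
  refine iSup_congr fun d => ?_
  show I.pI q (fun _ => Term.eval I _ (.var 0)) = _
  simp [Term.eval]

/-- Characterization of the value of a `Hex` conjunct. -/
lemma val_hexConj_eq_one {S : Signature} (q : S.Pred) (fp : S.Pred → S.Func)
    (p : S.Pred) (I : Interp S) (μ : ℕ → I.D)
    (har : S.fArity (fp p) = S.pArity p) :
    (hexConj q fp p).val I μ = 1 ↔
      ∀ μ' : ℕ → I.D,
        I.pI p (fun k => μ' (k : ℕ)) = 1 ∨
        I.pI p (fun k => μ' (k : ℕ)) <
          I.pI q (fun _ => I.fI (fp p) (fun k => μ' (k : ℕ))) := by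
  have hbody : ∀ μ' : ℕ → I.D,
      ((Formula.or
        (dleF .top (.atom p (fun k => .var (k : ℕ))))
        (dlF (.atom p (fun k => .var (k : ℕ)))
          (qAtom q (.func (fp p) (fun k => .var (k : ℕ)))))).val I μ' = 1 ↔
        (I.pI p (fun k => μ' (k : ℕ)) = 1 ∨
          I.pI p (fun k => μ' (k : ℕ)) <
            I.pI q (fun _ => I.fI (fp p) (fun k => μ' (k : ℕ))))) := by
    intro μ'
    show max ((dleF .top _).val I μ') ((dlF _ _).val I μ') = 1 ↔ _
    rw [max_eq_one_u]
    have h1 : (dleF .top (.atom p (fun k => .var (k : ℕ)))).val I μ' = 1 ↔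
        I.pI p (fun k => μ' (k : ℕ)) = 1 := by
      show gdelta (gimp 1 _) = 1 ↔ _
      rw [gdelta_eq_one, gimp_eq_one]
      exact ⟨fun h => le_antisymm (u_le_one _) h, fun h => h.ge⟩
    have h2 : (dlF (.atom p (fun k => .var (k : ℕ)))
        (qAtom q (.func (fp p) (fun k => .var (k : ℕ))))).val I μ' = 1 ↔
        I.pI p (fun k => μ' (k : ℕ)) <
          I.pI q (fun _ => I.fI (fp p) (fun k => μ' (k : ℕ))) := by
      show gimp (gdelta (gimp _ _)) 0 = 1 ↔ _
      rw [gimp_eq_one, le_zero_iff_u, gdelta_eq_zero, Ne, gimp_eq_one, not_le]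
      exact Iff.rfl
    rw [h1, h2]
  unfold hexConj
  rw [val_allCloseList_eq_one]
  constructor
  · intro h μ'
    set μ'' : ℕ → I.D := fun n => if n < S.pArity p then μ' n else μ n with hμ''
    have hagree : ∀ n ∉ List.range (S.pArity p), μ'' n = μ n := by
      intro n hn
      rw [List.mem_range] at hn
      simp [hμ'', hn]
    have hthis := (hbody μ'').mp (h μ'' hagree)
    have e1 : (fun k : Fin (S.pArity p) => μ'' (k : ℕ)) =
        fun k : Fin (S.pArity p) => μ' (k : ℕ) := by
      funext k; simp [hμ'', k.isLt]
    have e2 : (fun k : Fin (S.fArity (fp p)) => μ'' (k : ℕ)) =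
        fun k : Fin (S.fArity (fp p)) => μ' (k : ℕ) := by
      funext k
      have hk : (k : ℕ) < S.pArity p := har ▸ k.isLt
      simp [hμ'', hk]
    rwa [e1, e2] at hthis
  · intro h μ' _
    exact (hbody μ').mpr (h μ')

/-- Transfer of `allCloseList (△ B)` values under composition of the predicate
interpretations with a suitable map `g`. -/
lemma val_allCloseList_delta_comp {S : Signature} (I : Interp S)
    (Q : ∀ p : S.Pred, (Fin (S.pArity p) → I.D) → unitInterval)
    (g : unitInterval → unitInterval) (V : Set unitInterval)
    (h0 : (0 : unitInterval) ∈ V) (h1 : (1 : unitInterval) ∈ V)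
    (hg0 : g 0 = 0) (hg1 : g 1 = 1)
    (hmono : ∀ a ∈ V, ∀ b ∈ V, a < b → g a < g b)
    (xs : List ℕ) (B : Formula S) (hB : B.isQF)
    (hatom : ∀ p ∈ B.predsIn, ∀ args, Q p args = g (I.pI p args) ∧ I.pI p args ∈ V) :
    ∀ μ : ℕ → I.D, (allCloseList xs (.delta B)).val ⟨I.D, I.dNe, I.fI, Q⟩ μ =
      (allCloseList xs (.delta B)).val I μ := by
  have hgone : ∀ a ∈ V, (g a = 1 ↔ a = 1) := by
    intro a ha
    constructor
    · intro h
      by_contra hne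
      have hlt : a < 1 := lt_of_le_of_ne (u_le_one a) hne
      have := hmono a ha 1 h1 hlt
      rw [hg1, h] at this
      exact lt_irrefl _ this
    · rintro rfl; exact hg1
  have key : ∀ μ : ℕ → I.D, (Formula.delta B).val ⟨I.D, I.dNe, I.fI, Q⟩ μ =
      (Formula.delta B).val I μ := by
    intro μ
    obtain ⟨hc, hV⟩ := Formula.val_comp I Q g V h0 h1 hg0 hg1 hmono B hB μ hatom
    show gdelta (B.val ⟨I.D, I.dNe, I.fI, Q⟩ μ) = gdelta (B.val I μ)
    rw [hc]
    unfold gdelta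
    rcases eq_or_ne (B.val I μ) 1 with h | h
    · rw [if_pos ((hgone _ hV).mpr h), if_pos h]
    · rw [if_neg (fun hc' => h ((hgone _ hV).mp hc')), if_neg h]
  induction xs with
  | nil => exact key
  | cons x xs ih =>
    intro μ
    show (⨅ d : I.D, _) = ⨅ d : I.D, _
    exact iInf_congr fun d => ih _

end Lemmas4

/-- SAT-Skolemization, step 2: for closed prenex formulas `A₁,…,Aₘ`
(prefix `pref i`, quantifier-free matrix `P i`) and a fresh monadic predicate symbol `q`,
`∃x q(x) ∧ sk_q(A₁) ∧ ⋯ ∧ sk_q(Aₘ)` is 1-satisfiable iff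
`Hex(q,A) ∧ sk_q(A₁) ∧ ⋯ ∧ sk_q(Aₘ)` is 1-satisfiable.  Here `ps` lists (without
repetitions) the predicate symbols occurring in the `sk_q(Aᵢ)` (that is, `q` together
with the predicate symbols of the matrices), the Skolem function symbols `skf i j` are
fresh and of the correct arity, and the function symbols `f_p = fp p` are fresh
(pairwise distinct, distinct from the `skf i j`, not occurring in the matrices) with
the arity of `p`. -/
theorem sat_skolemization_step2 (S : Signature) (q : S.Pred) (hq : S.pArity q = 1)
    (m : ℕ) (pref : Fin (m + 1) → List Bool) (P : Fin (m + 1) → Formula S)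
    (hQF : ∀ i, (P i).isQF)
    (hclosed : ∀ i, ∀ v ∈ (P i).freeVars, v < (pref i).length)
    (hqfresh : ∀ i, q ∉ (P i).predsIn)
    (skf : Fin (m + 1) → ℕ → S.Func)
    (harity : ∀ i, ∀ j ∈ exPos (pref i), S.fArity (skf i j) = j + 1)
    (hfresh : ∀ i k, ∀ j ∈ exPos (pref i), skf i j ∉ (P k).funcsIn)
    (hinj : ∀ i i', ∀ j ∈ exPos (pref i), ∀ j' ∈ exPos (pref i'),
      skf i j = skf i' j' → i = i' ∧ j = j')
    (ps : List S.Pred) (hnodup : ps.Nodup)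
    (hps : ∀ p : S.Pred, p ∈ ps ↔ (p = q ∨ ∃ i, p ∈ (P i).predsIn))
    (fp : S.Pred → S.Func)
    (hfpArity : ∀ p ∈ ps, S.fArity (fp p) = S.pArity p)
    (hfpFresh : ∀ p ∈ ps, ∀ i, fp p ∉ (P i).funcsIn)
    (hfpSkf : ∀ p ∈ ps, ∀ i, ∀ j ∈ exPos (pref i), fp p ≠ skf i j)
    (hfpInj : ∀ p ∈ ps, ∀ p' ∈ ps, fp p = fp p' → p = p') :
    sat1 (Formula.and (exQ q)
        (bigAnd (skq q (skf 0) (pref 0) (P 0))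
          (List.ofFn (fun i : Fin m => skq q (skf i.succ) (pref i.succ) (P i.succ))))) ↔
      sat1 (Formula.and (hexFormula q fp ps)
        (bigAnd (skq q (skf 0) (pref 0) (P 0))
          (List.ofFn (fun i : Fin m => skq q (skf i.succ) (pref i.succ) (P i.succ))))) := by
    classical
  haveI : DecidableEq S.Func := Classical.decEq _
  have hq_mem : q ∈ ps := (hps q).mpr (Or.inl rfl)
  constructor
  · -- (→): from a model of ∃x q(x) reinterpret the fresh functions f_p
    rintro ⟨I, μ, hval⟩
    rw [Formula.val, min_eq_one_u, val_bigAnd_eq_one] at hval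
    obtain ⟨hE, hSK⟩ := hval
    rw [val_exQ] at hE
    -- pick a domain element whose q-value exceeds a given value < 1
    obtain ⟨pick, hpick⟩ : ∃ pick : unitInterval → I.D,
        ∀ v : unitInterval, v ≠ 1 → v < I.pI q (fun _ => pick v) := by
      refine ⟨fun v => if h : ∃ d : I.D, v < I.pI q (fun _ => d) then h.choose
        else Classical.arbitrary I.D, ?_⟩
      intro v hv
      have hex : ∃ d : I.D, v < I.pI q (fun _ => d) := by
        have hvlt : v < 1 := lt_of_le_of_ne (u_le_one v) hv
        rw [← hE] at hvlt
        exact lt_iSup_iff.mp hvlt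
      simp only [dif_pos hex]
      exact hex.choose_spec
    obtain ⟨newval, hnewval⟩ : ∃ nv : ∀ p : S.Pred, (Fin (S.fArity (fp p)) → I.D) → I.D,
        ∀ p (hp : p ∈ ps) (es : Fin (S.fArity (fp p)) → I.D),
          nv p es = pick (I.pI p (fun k => es (Fin.cast (hfpArity p hp).symm k))) := by
      refine ⟨fun p es => if h : S.fArity (fp p) = S.pArity p then
        pick (I.pI p (fun k => es (Fin.cast h.symm k))) else Classical.arbitrary I.D, ?_⟩
      intro p hp es
      simp only [dif_pos (hfpArity p hp)]
    obtain ⟨F, hFa, hFb⟩ : ∃ F : ∀ f : S.Func, (Fin (S.fArity f) → I.D) → I.D,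
        (∀ f, (∀ p ∈ ps, fp p ≠ f) → F f = I.fI f) ∧
        (∀ p ∈ ps, F (fp p) = newval p) := by
      refine ⟨ps.foldr (fun p F' => Function.update F' (fp p) (newval p)) I.fI, ?_⟩
      have key : ∀ l : List S.Pred, l.Nodup → (∀ p ∈ l, p ∈ ps) →
          (∀ f, (∀ p ∈ l, fp p ≠ f) →
            l.foldr (fun p F' => Function.update F' (fp p) (newval p)) I.fI f = I.fI f) ∧
          (∀ p ∈ l,
            l.foldr (fun p F' => Function.update F' (fp p) (newval p)) I.fI (fp p)
              = newval p) := by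
        intro l hnd hsub
        induction l with
        | nil => exact ⟨fun f _ => rfl, fun p hp => absurd hp List.not_mem_nil⟩
        | cons p0 rest ih =>
          obtain ⟨hnd0, hndr⟩ := List.nodup_cons.mp hnd
          obtain ⟨ih1, ih2⟩ := ih hndr (fun p hp => hsub p (List.mem_cons_of_mem _ hp))
          constructor
          · intro f hf
            exact (Function.update_of_ne ((hf p0 List.mem_cons_self).symm) _ _).trans
              (ih1 f (fun p hp => hf p (List.mem_cons_of_mem _ hp)))
          · intro p hp
            rcases List.mem_cons.mp hp with rfl | hp'
            · exact Function.update_self _ _ _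
            · refine (Function.update_of_ne ?_ _ _).trans (ih2 p hp')
              intro he
              have hpe : p = p0 := hfpInj p (hsub p hp) p0
                (hsub p0 List.mem_cons_self) he
              exact hnd0 (hpe ▸ hp')
      exact key ps hnodup (fun _ h => h)
    refine ⟨⟨I.D, I.dNe, F, I.pI⟩, μ, ?_⟩
    have hskJ : ∀ i : Fin (m + 1),
        (skq q (skf i) (pref i) (P i)).val ⟨I.D, I.dNe, F, I.pI⟩ μ =
          (skq q (skf i) (pref i) (P i)).val I μ := by
      intro i
      refine Formula.val_congr I F I.pI _ μ μ ?_ (fun _ _ => rfl) (fun _ _ => rfl)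
      intro f hf
      have hf' := funcsIn_skq q (skf i) (pref i) (P i) hf
      refine hFa f ?_
      intro p hp heq
      rcases hf' with h | h
      · exact hfpFresh p hp i (heq ▸ h)
      · obtain ⟨j, hj, rfl⟩ := h
        exact hfpSkf p hp i j hj heq
    rw [Formula.val, min_eq_one_u]
    constructor
    · -- Hex holds
      rw [hexFormula, val_bigAndL_eq_one]
      intro B hB
      obtain ⟨p, hp, rfl⟩ := List.mem_map.mp hB
      rw [val_hexConj_eq_one q fp p ⟨I.D, I.dNe, F, I.pI⟩ μ (hfpArity p hp)]
      intro μ'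
      rcases eq_or_ne (I.pI p (fun k => μ' (k : ℕ))) 1 with h1 | h1
      · exact Or.inl h1
      · refine Or.inr ?_
        show I.pI p _ < I.pI q (fun _ => F (fp p) (fun k => μ' (k : ℕ)))
        rw [hFb p hp, hnewval p hp]
        have htup : (fun k : Fin (S.pArity p) =>
            (fun k : Fin (S.fArity (fp p)) => μ' (k : ℕ))
              (Fin.cast (hfpArity p hp).symm k)) =
            fun k : Fin (S.pArity p) => μ' (k : ℕ) := by
          funext k
          simp
        rw [htup]
        exact hpick _ h1
    · -- the Skolem forms keep their values
      rw [val_bigAnd_eq_one]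
      constructor
      · rw [hskJ 0]; exact hSK.1
      · intro B hB
        obtain ⟨i, rfl⟩ := List.mem_ofFn.mp hB
        rw [hskJ i.succ]
        exact hSK.2 _ hB
  · -- (←): compress truth values so that sup of q becomes 1
    rintro ⟨I, μ, hval⟩
    rw [Formula.val, min_eq_one_u, val_bigAnd_eq_one] at hval
    obtain ⟨hH, hSK⟩ := hval
    rw [hexFormula, val_bigAndL_eq_one] at hH
    have hHex : ∀ p ∈ ps, ∀ μ' : ℕ → I.D,
        I.pI p (fun k => μ' (k : ℕ)) = 1 ∨
        I.pI p (fun k => μ' (k : ℕ)) <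
          I.pI q (fun _ => I.fI (fp p) (fun k => μ' (k : ℕ))) := by
      intro p hp
      exact (val_hexConj_eq_one q fp p I μ (hfpArity p hp)).mp
        (hH _ (List.mem_map_of_mem hp))
    set qv : I.D → unitInterval := fun d => I.pI q (fun _ => d) with hqv
    rcases eq_or_ne (⨆ d : I.D, qv d) 1 with hsu | hsu
    · -- the supremum is already 1: the same model works
      refine ⟨I, μ, ?_⟩
      rw [Formula.val, min_eq_one_u]
      refine ⟨?_, ?_⟩
      · rw [val_exQ]; exact hsu
      · rw [val_bigAnd_eq_one]; exact hSK
    · -- otherwise compress values below the supremum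
      have hsu' : (⨆ d : I.D, qv d) < 1 := lt_of_le_of_ne (u_le_one _) hsu
      set su : unitInterval := ⨆ d : I.D, qv d with hsud
      have hqlt : ∀ d : I.D, qv d < su := by
        intro d
        rcases hHex q hq_mem (fun _ => d) with h1 | h1
        · exact absurd (le_antisymm (u_le_one su) (h1 ▸ le_iSup qv d)) hsu
        · exact lt_of_lt_of_le h1 (le_iSup qv _)
      have hs0 : (0 : ℝ) < (su : ℝ) := by
        have hd := hqlt (Classical.arbitrary I.D)
        have hlt : ((qv (Classical.arbitrary I.D)) : ℝ) < (su : ℝ) :=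
          Subtype.coe_lt_coe.mpr hd
        have h0 : (0 : ℝ) ≤ ((qv (Classical.arbitrary I.D)) : ℝ) :=
          (qv (Classical.arbitrary I.D)).2.1
        linarith
      have hs1 : (su : ℝ) < 1 := by
        have h := Subtype.coe_lt_coe.mpr hsu'
        rwa [Set.Icc.coe_one] at h
      obtain ⟨g, hgs, hgb⟩ : ∃ g : unitInterval → unitInterval,
          (∀ a : unitInterval, (a : ℝ) < (su : ℝ) → (g a : ℝ) = (a : ℝ) / (su : ℝ)) ∧
          (∀ a : unitInterval, ¬ (a : ℝ) < (su : ℝ) → g a = 1) := by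
        refine ⟨fun a => if h : (a : ℝ) < (su : ℝ) then
          ⟨(a : ℝ) / (su : ℝ), div_nonneg a.2.1 hs0.le, (div_le_one hs0).mpr h.le⟩
          else 1, ?_, ?_⟩
        · intro a ha
          simp only [dif_pos ha]
        · intro a ha
          simp only [dif_neg ha]
      set V : Set unitInterval := {a | a = 1 ∨ (a : ℝ) < (su : ℝ)} with hV
      have h0V : (0 : unitInterval) ∈ V := Or.inr (by simpa using hs0)
      have h1V : (1 : unitInterval) ∈ V := Or.inl rfl
      have hg0 : g 0 = 0 := by
        have h := hgs 0 (by simpa using hs0)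
        ext1
        rw [h]
        simp
      have hg1 : g 1 = 1 := by
        refine hgb 1 ?_
        rw [Set.Icc.coe_one]
        exact not_lt.mpr hs1.le
      have hgltone : ∀ a : unitInterval, (a : ℝ) < (su : ℝ) → g a < 1 := by
        intro a ha
        refine Subtype.coe_lt_coe.mp ?_
        rw [hgs a ha, Set.Icc.coe_one]
        exact (div_lt_one hs0).mpr ha
      have hmono : ∀ a ∈ V, ∀ b ∈ V, a < b → g a < g b := by
        intro a ha b hb hab
        rcases hb with rfl | hbs
        · have has : (a : ℝ) < (su : ℝ) := by
            rcases ha with rfl | h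
            · exact absurd hab (lt_irrefl _)
            · exact h
          rw [hg1]
          exact hgltone a has
        · have has : (a : ℝ) < (su : ℝ) :=
            lt_trans (Subtype.coe_lt_coe.mpr hab) hbs
          refine Subtype.coe_lt_coe.mp ?_
          rw [hgs a has, hgs b hbs]
          have hab' : (a : ℝ) < (b : ℝ) := Subtype.coe_lt_coe.mpr hab
          gcongr
      have hVatom : ∀ p ∈ ps, ∀ args : Fin (S.pArity p) → I.D, I.pI p args ∈ V := by
        intro p hp args
        set μ' : ℕ → I.D := fun n =>
          if h : n < S.pArity p then args ⟨n, h⟩ else Classical.arbitrary I.D with hμ'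
        have hargs : (fun k : Fin (S.pArity p) => μ' (k : ℕ)) = args := by
          funext k
          rw [hμ']
          simp only [k.isLt, dif_pos]
        rcases hHex p hp μ' with h1 | h1
        · rw [hargs] at h1
          exact Or.inl h1
        · rw [hargs] at h1
          refine Or.inr ?_
          have h2 : I.pI q (fun _ => I.fI (fp p) (fun k => μ' (k : ℕ))) < su :=
            hqlt _
          exact Subtype.coe_lt_coe.mpr (lt_trans h1 h2)
      -- the compressed model
      refine ⟨⟨I.D, I.dNe, I.fI, fun p args => g (I.pI p args)⟩, μ, ?_⟩
      have hskJ : ∀ i : Fin (m + 1),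
          (skq q (skf i) (pref i) (P i)).val
            ⟨I.D, I.dNe, I.fI, fun p args => g (I.pI p args)⟩ μ =
          (skq q (skf i) (pref i) (P i)).val I μ := by
        intro i
        refine val_allCloseList_delta_comp I _ g V h0V h1V hg0 hg1 hmono _ _
          (isQF_guards _ _ _ (Formula.isQF_subst _ _ (hQF i))) ?_ μ
        intro p hp args
        have hpps : p ∈ ps := by
          have hmem := predsIn_guards q (exPos (pref i)) _ hp
          rw [Formula.predsIn_subst] at hmem
          rcases hmem with rfl | h
          · exact hq_mem
          · exact (hps p).mpr (Or.inr ⟨i, h⟩)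
        exact ⟨rfl, hVatom p hpps args⟩
      rw [Formula.val, min_eq_one_u]
      constructor
      · -- now ∃x q(x) has value 1
        rw [val_exQ]
        show (⨆ d : I.D, g (qv d)) = 1
        by_contra hc
        have ht : (⨆ d : I.D, g (qv d)) < 1 :=
          lt_of_le_of_ne (u_le_one _) hc
        set t : unitInterval := ⨆ d : I.D, g (qv d) with htd
        have ht1 : (t : ℝ) < 1 := by
          have h := Subtype.coe_lt_coe.mpr ht
          rwa [Set.Icc.coe_one] at h
        have hcmem : (t : ℝ) * (su : ℝ) ∈ Set.Icc (0 : ℝ) 1 := by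
          constructor
          · exact mul_nonneg t.2.1 hs0.le
          · nlinarith [t.2.1, t.2.2, hs0.le, hs1.le]
        have hle : ∀ d : I.D, qv d ≤ (⟨(t : ℝ) * (su : ℝ), hcmem⟩ : unitInterval) := by
          intro d
          have hlt : ((qv d) : ℝ) < (su : ℝ) := Subtype.coe_lt_coe.mpr (hqlt d)
          have hled : g (qv d) ≤ t := le_iSup (fun d => g (qv d)) d
          have hled' : ((qv d) : ℝ) / (su : ℝ) ≤ (t : ℝ) := by
            have h := Subtype.coe_le_coe.mpr hled
            rwa [hgs (qv d) hlt] at h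
          refine Subtype.coe_le_coe.mp ?_
          show ((qv d) : ℝ) ≤ (t : ℝ) * (su : ℝ)
          rw [div_le_iff₀ hs0] at hled'
          exact hled'
        have hsule : su ≤ (⟨(t : ℝ) * (su : ℝ), hcmem⟩ : unitInterval) :=
          iSup_le hle
        have hfin : (su : ℝ) ≤ (t : ℝ) * (su : ℝ) := Subtype.coe_le_coe.mpr hsule
        nlinarith
      · rw [val_bigAnd_eq_one]
        constructor
        · rw [hskJ 0]; exact hSK.1
        · intro B hB
          obtain ⟨i, rfl⟩ := List.mem_ofFn.mp hB
          rw [hskJ i.succ]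
          exact hSK.2 _ hB
end

section
/- Standard Skolemization preserves 1-satisfiability for △-guarded prenex formulas: let Q x̄ △B be a closed prenex formula of first-order Gödel logic with △ whose quantifier-free part is of the form △B, and let ∀x̄' △B^S be obtained by standard Skolemization for satisfiability, i.e. every existentially quantified variable x is replaced by a term f(ȳ) for a fresh function symbol f, where ȳ are the universally quantified variables in whose scope x occurs. Then Q x̄ △B is 1-satisfiable if and only if ∀x̄' △B^S is 1-satisfiable. -/
/-- The standard (satisfiability) Skolem substitution for a prenex prefix `pref`:
each existentially quantified variable `i` is replaced by the Skolem term
`sk i (ȳ)` where `ȳ` are the universally quantified variables `< i` (i.e. the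
universal quantifiers in whose scope `i` occurs); universal variables are kept. -/
def skSubstSatStd {S : Signature} (pref : List Bool) (sk : ℕ → S.Func) : ℕ → Term S :=
  fun i =>
    if pref.getD i true = false then
      Term.func (sk i) (fun j => Term.var ((univPos (pref.take i)).getD (j : ℕ) 0))
    else Term.var i

/-! ### Auxiliary development for the Skolemization theorem -/

namespace SkolemAux

open Function

lemma uone_top : (1 : unitInterval) = ⊤ := rfl
lemma uzero_bot : (0 : unitInterval) = ⊥ := rfl

lemma uzero_ne_one : (0 : unitInterval) ≠ 1 := fun h => by
  have := congrArg Subtype.val h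
  norm_num at this

lemma iInf_eq_one {ι : Sort*} (f : ι → unitInterval) : ⨅ i, f i = 1 ↔ ∀ i, f i = 1 := by
  rw [uone_top]; exact iInf_eq_top

variable {S : Signature}

/-- Two-valuedness of `△`-formulas. -/
lemma delta_twoval (B : Formula S) (I : Interp S) (ν : ℕ → I.D) :
    (Formula.delta B).val I ν = 0 ∨ (Formula.delta B).val I ν = 1 := by
  simp only [Formula.val, gdelta]
  split <;> simp

/-- getD with the two defaults agree within range. -/
lemma getD_tf {pref : List Bool} {v : ℕ} (h : v < pref.length) :
    pref.getD v true = pref.getD v false := by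
  rw [List.getD_eq_getElem _ _ h, List.getD_eq_getElem _ _ h]

lemma mem_univPos {pref : List Bool} {u : ℕ} :
    u ∈ univPos pref ↔ pref.getD u false = true := by
  simp only [univPos, List.mem_filter, List.mem_range, decide_eq_true_eq]
  constructor
  · rintro ⟨-, h⟩; exact h
  · intro h
    refine ⟨?_, h⟩
    by_contra hu
    rw [List.getD_eq_default _ _ (by omega)] at h
    simp at h

lemma mem_exPos {pref : List Bool} {u : ℕ} :
    u ∈ exPos pref ↔ pref.getD u true = false := by
  simp only [exPos, List.mem_filter, List.mem_range, decide_eq_true_eq]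
  constructor
  · rintro ⟨-, h⟩; exact h
  · intro h
    refine ⟨?_, h⟩
    by_contra hu
    rw [List.getD_eq_default _ _ (by omega)] at h
    simp at h

lemma getD_take {pref : List Bool} {v u : ℕ} (h : u < v) (d : Bool) :
    (pref.take v).getD u d = pref.getD u d := by
  rw [List.getD_eq_getElem?_getD, List.getD_eq_getElem?_getD, List.getElem?_take_of_lt h]

lemma mem_univPos_take {pref : List Bool} {v u : ℕ} :
    u ∈ univPos (pref.take v) ↔ u < v ∧ pref.getD u false = true := by
  rw [mem_univPos]
  constructor
  · intro h
    have hu : u < (pref.take v).length := by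
      by_contra hu
      rw [List.getD_eq_default _ _ (by omega)] at h
      simp at h
    have huv : u < v := by
      have := hu
      simp only [List.length_take] at this
      omega
    exact ⟨huv, by rwa [getD_take huv] at h⟩
  · rintro ⟨h1, h2⟩
    rwa [getD_take h1]

lemma univPos_nodup (pref : List Bool) : (univPos pref).Nodup :=
  List.nodup_range.filter _

lemma getD_indexOf {L : List ℕ} {u : ℕ} (h : u ∈ L) :
    L.getD (L.idxOf u) 0 = u := by
  rw [List.getD_eq_getElem _ _ (List.idxOf_lt_length_iff.2 h)]
  exact List.getElem_idxOf _

lemma mem_of_getD {L : List ℕ} {j : ℕ} (h : j < L.length) : L.getD j 0 ∈ L := by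
  rw [List.getD_eq_getElem _ _ h]; exact List.getElem_mem _

/-! ### Evaluation congruence and substitution lemmas -/

lemma teval_congr (I : Interp S) (fI' : ∀ f : S.Func, (Fin (S.fArity f) → I.D) → I.D)
    (μ₁ μ₂ : ℕ → I.D) (t : Term S) (hf : ∀ f ∈ t.funcsIn, fI' f = I.fI f)
    (hμ : ∀ v ∈ t.vars, μ₁ v = μ₂ v) :
    t.eval ⟨I.D, I.dNe, fI', I.pI⟩ μ₁ = t.eval I μ₂ := by
  induction t with
  | var n => exact hμ n (by simp [Term.vars])
  | func f args ih =>
    show fI' f _ = I.fI f _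
    rw [hf f (by simp [Term.funcsIn])]
    congr 1
    funext j
    have hfs : ∀ g ∈ (args j).funcsIn, fI' g = I.fI g := by
      intro g hg
      refine hf g ?_
      simp only [Term.funcsIn, Set.mem_insert_iff, Set.mem_iUnion]
      exact Or.inr ⟨j, hg⟩
    have hvs : ∀ v ∈ (args j).vars, μ₁ v = μ₂ v := by
      intro v hv
      refine hμ v ?_
      simp only [Term.vars, Set.mem_iUnion]
      exact ⟨j, hv⟩
    exact ih j hfs hvs

lemma fval_congr (I : Interp S) (fI' : ∀ f : S.Func, (Fin (S.fArity f) → I.D) → I.D)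
    (μ₁ μ₂ : ℕ → I.D) (A : Formula S) (hQF : A.isQF)
    (hf : ∀ f ∈ A.funcsIn, fI' f = I.fI f)
    (hμ : ∀ v ∈ A.freeVars, μ₁ v = μ₂ v) :
    A.val ⟨I.D, I.dNe, fI', I.pI⟩ μ₁ = A.val I μ₂ := by
  induction A with
  | bot => rfl
  | top => rfl
  | atom p args =>
    show I.pI p _ = I.pI p _
    congr 1
    funext j
    have hfs : ∀ g ∈ (args j).funcsIn, fI' g = I.fI g := by
      intro g hg
      refine hf g ?_
      simp only [Formula.funcsIn, Set.mem_iUnion]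
      exact ⟨j, hg⟩
    have hvs : ∀ v ∈ (args j).vars, μ₁ v = μ₂ v := by
      intro v hv
      refine hμ v ?_
      simp only [Formula.freeVars, Set.mem_iUnion]
      exact ⟨j, hv⟩
    exact teval_congr I fI' μ₁ μ₂ (args j) hfs hvs
  | and A B ihA ihB =>
    show min _ _ = min _ _
    rw [ihA hQF.1 (fun g hg => hf g (Or.inl hg)) (fun v hv => hμ v (Or.inl hv)),
      ihB hQF.2 (fun g hg => hf g (Or.inr hg)) (fun v hv => hμ v (Or.inr hv))]
  | or A B ihA ihB =>
    show max _ _ = max _ _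
    rw [ihA hQF.1 (fun g hg => hf g (Or.inl hg)) (fun v hv => hμ v (Or.inl hv)),
      ihB hQF.2 (fun g hg => hf g (Or.inr hg)) (fun v hv => hμ v (Or.inr hv))]
  | imp A B ihA ihB =>
    show gimp _ _ = gimp _ _
    rw [ihA hQF.1 (fun g hg => hf g (Or.inl hg)) (fun v hv => hμ v (Or.inl hv)),
      ihB hQF.2 (fun g hg => hf g (Or.inr hg)) (fun v hv => hμ v (Or.inr hv))]
  | delta A ihA =>
    show gdelta _ = gdelta _
    rw [ihA hQF hf hμ]
  | all x A ih => exact absurd hQF id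
  | ex x A ih => exact absurd hQF id

lemma teval_subst (I : Interp S) (σ : ℕ → Term S) (ν : ℕ → I.D) (t : Term S) :
    (t.subst σ).eval I ν = t.eval I (fun v => (σ v).eval I ν) := by
  induction t with
  | var n => rfl
  | func f args ih =>
    show I.fI f _ = I.fI f _
    congr 1
    funext j
    exact ih j

lemma fval_subst (I : Interp S) (σ : ℕ → Term S) (ν : ℕ → I.D) (A : Formula S)
    (hQF : A.isQF) :
    (A.subst σ).val I ν = A.val I (fun v => (σ v).eval I ν) := by
  induction A with
  | bot => rfl
  | top => rfl
  | atom p args =>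
    show I.pI p _ = I.pI p _
    congr 1
    funext j
    exact teval_subst I σ ν (args j)
  | and A B ihA ihB => show min _ _ = min _ _; rw [ihA hQF.1, ihB hQF.2]
  | or A B ihA ihB => show max _ _ = max _ _; rw [ihA hQF.1, ihB hQF.2]
  | imp A B ihA ihB => show gimp _ _ = gimp _ _; rw [ihA hQF.1, ihB hQF.2]
  | delta A ihA => show gdelta _ = gdelta _; rw [ihA hQF]
  | all x A ih => exact absurd hQF id
  | ex x A ih => exact absurd hQF id

/-! ### Classical reading of △-guarded prenex formulas -/

/-- Classical satisfaction of the prenex block. -/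
def holds (I : Interp S) (P : Formula S) : List Bool → ℕ → (ℕ → I.D) → Prop
  | [], _, μ => P.val I μ = 1
  | true :: rest, i, μ => ∀ d, holds I P rest (i + 1) (Function.update μ i d)
  | false :: rest, i, μ => ∃ d, holds I P rest (i + 1) (Function.update μ i d)

lemma buildPrenex_twoval (I : Interp S) (P : Formula S)
    (h2 : ∀ ν, P.val I ν = 0 ∨ P.val I ν = 1) :
    ∀ (pref : List Bool) (i : ℕ) (μ : ℕ → I.D),
      (buildPrenex pref i P).val I μ = 0 ∨ (buildPrenex pref i P).val I μ = 1
  | [], _, μ => h2 μ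
  | true :: rest, i, μ => by
    simp only [buildPrenex, if_true, Formula.val]
    by_cases h : ∀ d, (buildPrenex rest (i + 1) P).val I (Function.update μ i d) = 1
    · right; rw [iInf_eq_one]; exact h
    · left
      push_neg at h
      obtain ⟨d, hd⟩ := h
      have h0 := (buildPrenex_twoval I P h2 rest (i + 1) (Function.update μ i d)).resolve_right hd
      refine le_antisymm (le_trans (iInf_le _ d) (le_of_eq h0)) ?_
      rw [uzero_bot]; exact bot_le
  | false :: rest, i, μ => by
    simp only [buildPrenex, if_false, Formula.val]
    by_cases h : ∃ d, (buildPrenex rest (i + 1) P).val I (Function.update μ i d) = 1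
    · right
      obtain ⟨d, hd⟩ := h
      refine le_antisymm (by rw [uone_top]; exact le_top) ?_
      exact le_trans (le_of_eq hd.symm)
        (le_iSup (fun d => (buildPrenex rest (i + 1) P).val I (Function.update μ i d)) d)
    · left
      push_neg at h
      refine le_antisymm (iSup_le fun d => ?_) (by rw [uzero_bot]; exact bot_le)
      exact le_of_eq ((buildPrenex_twoval I P h2 rest (i + 1) (Function.update μ i d)).resolve_right (h d))

lemma buildPrenex_val_one (I : Interp S) (P : Formula S)
    (h2 : ∀ ν, P.val I ν = 0 ∨ P.val I ν = 1) :
    ∀ (pref : List Bool) (i : ℕ) (μ : ℕ → I.D),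
      (buildPrenex pref i P).val I μ = 1 ↔ holds I P pref i μ
  | [], _, _ => Iff.rfl
  | true :: rest, i, μ => by
    simp only [buildPrenex, if_true, Formula.val]
    rw [iInf_eq_one]
    show _ ↔ ∀ d, holds I P rest (i + 1) (Function.update μ i d)
    exact forall_congr' fun d => buildPrenex_val_one I P h2 rest (i + 1) (Function.update μ i d)
  | false :: rest, i, μ => by
    simp only [buildPrenex, if_false, Bool.false_eq_true, Formula.val]
    show _ ↔ ∃ d, holds I P rest (i + 1) (Function.update μ i d)
    constructor
    · intro h
      by_contra hn
      push_neg at hn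
      have h0 : ∀ d, (buildPrenex rest (i + 1) P).val I (Function.update μ i d) = 0 := by
        intro d
        refine (buildPrenex_twoval I P h2 rest (i + 1) _).resolve_right fun h1 => hn d ?_
        exact (buildPrenex_val_one I P h2 rest (i + 1) _).mp h1
      have : (⨆ d : I.D, (buildPrenex rest (i + 1) P).val I (Function.update μ i d)) = 0 := by
        refine le_antisymm (iSup_le fun d => le_of_eq (h0 d)) ?_
        rw [uzero_bot]; exact bot_le
      rw [this] at h
      exact uzero_ne_one h
    · rintro ⟨d, hd⟩
      have h1 := (buildPrenex_val_one I P h2 rest (i + 1) (Function.update μ i d)).mpr hd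
      refine le_antisymm (by rw [uone_top]; exact le_top) ?_
      exact le_trans (le_of_eq h1.symm)
        (le_iSup (fun d => (buildPrenex rest (i + 1) P).val I (Function.update μ i d)) d)

lemma allCloseList_val_one (I : Interp S) (P : Formula S) :
    ∀ (xs : List ℕ) (μ : ℕ → I.D),
      (allCloseList xs P).val I μ = 1 ↔
        ∀ ν : ℕ → I.D, (∀ v, v ∉ xs → ν v = μ v) → P.val I ν = 1
  | [], μ => by
    constructor
    · intro h ν hν
      have : ν = μ := funext fun v => hν v (by simp)
      rwa [this]
    · intro h
      exact h μ (fun _ _ => rfl)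
  | x :: xs, μ => by
    show (⨅ d : I.D, (allCloseList xs P).val I (Function.update μ x d)) = 1 ↔ _
    rw [iInf_eq_one]
    constructor
    · intro h ν hν
      have := (allCloseList_val_one I P xs (Function.update μ x (ν x))).mp (h (ν x))
      refine this ν fun v hv => ?_
      by_cases hvx : v = x
      · subst hvx; rw [Function.update_self]
      · rw [Function.update_of_ne hvx]
        exact hν v (by simp [hvx, hv])
    · intro h d
      rw [allCloseList_val_one I P xs (Function.update μ x d)]
      intro ν hν
      refine h ν fun v hv => ?_
      simp only [List.mem_cons, not_or] at hv
      rw [hν v hv.2, Function.update_of_ne hv.1]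

/-! ### Plays: resolving the quantifier prefix with strategies -/

/-- The assignment resulting from resolving the prefix: universal variables are
taken from `ρ`, existential variables are produced by the strategy `w`. -/
def playS (I : Interp S) (w : ℕ → (ℕ → I.D) → I.D) :
    List Bool → ℕ → (ℕ → I.D) → (ℕ → I.D) → ℕ → I.D
  | [], _, μ, _ => μ
  | true :: rest, i, μ, ρ => playS I w rest (i + 1) (Function.update μ i (ρ i)) ρ
  | false :: rest, i, μ, ρ => playS I w rest (i + 1) (Function.update μ i (w i μ)) ρ

variable {I : Interp S} {w : ℕ → (ℕ → I.D) → I.D}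

lemma playS_lt : ∀ (rest : List Bool) (i : ℕ) (μ ρ : ℕ → I.D) (v : ℕ), v < i →
    playS I w rest i μ ρ v = μ v
  | [], _, _, _, _, _ => rfl
  | true :: rest, i, μ, ρ, v, h => by
    rw [playS, playS_lt rest (i + 1) _ ρ v (by omega), Function.update_of_ne (by omega)]
  | false :: rest, i, μ, ρ, v, h => by
    rw [playS, playS_lt rest (i + 1) _ ρ v (by omega), Function.update_of_ne (by omega)]

lemma playS_congr_ρ : ∀ (rest : List Bool) (i : ℕ) (μ ρ₁ ρ₂ : ℕ → I.D),
    (∀ u, i ≤ u → ρ₁ u = ρ₂ u) → playS I w rest i μ ρ₁ = playS I w rest i μ ρ₂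
  | [], _, _, _, _, _ => rfl
  | true :: rest, i, μ, ρ₁, ρ₂, h => by
    rw [playS, playS, h i le_rfl]
    exact playS_congr_ρ rest (i + 1) _ ρ₁ ρ₂ (fun u hu => h u (by omega))
  | false :: rest, i, μ, ρ₁, ρ₂, h => by
    rw [playS, playS]
    exact playS_congr_ρ rest (i + 1) _ ρ₁ ρ₂ (fun u hu => h u (by omega))

lemma playS_univ : ∀ (rest : List Bool) (i : ℕ) (μ ρ : ℕ → I.D) (v : ℕ), i ≤ v →
    rest.getD (v - i) false = true → playS I w rest i μ ρ v = ρ v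
  | [], i, μ, ρ, v, hle, hg => by simp at hg
  | b :: rest, i, μ, ρ, v, hle, hg => by
    rcases eq_or_lt_of_le hle with rfl | h
    · have hb : b = true := by simpa using hg
      subst hb
      rw [playS, playS_lt rest (i + 1) _ ρ i (by omega), Function.update_self]
    · have hg' : rest.getD (v - (i + 1)) false = true := by
        have hvi : v - i = (v - (i + 1)) + 1 := by omega
        rwa [hvi, List.getD_eq_getElem?_getD, List.getElem?_cons_succ,
          ← List.getD_eq_getElem?_getD] at hg
      cases b
      · rw [playS]; exact playS_univ rest (i + 1) _ ρ v (by omega) hg'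
      · rw [playS]; exact playS_univ rest (i + 1) _ ρ v (by omega) hg'

lemma playS_ex (v : ℕ) (hw : ∀ μ₁ μ₂ : ℕ → I.D, (∀ u, u < v → μ₁ u = μ₂ u) → w v μ₁ = w v μ₂) :
    ∀ (rest : List Bool) (i : ℕ) (μ ρ : ℕ → I.D), i ≤ v →
      rest.getD (v - i) true = false →
      playS I w rest i μ ρ v = w v (playS I w rest i μ ρ)
  | [], i, μ, ρ, hle, hg => by simp at hg
  | b :: rest, i, μ, ρ, hle, hg => by
    rcases eq_or_lt_of_le hle with rfl | h
    · have hb : b = false := by simpa using hg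
      subst hb
      rw [playS]
      have h1 : playS I w rest (i + 1) (Function.update μ i (w i μ)) ρ i = w i μ := by
        rw [playS_lt rest (i + 1) _ ρ i (by omega), Function.update_self]
      rw [h1]
      refine hw μ _ fun u hu => ?_
      rw [playS_lt rest (i + 1) _ ρ u (by omega), Function.update_of_ne (by omega)]
    · have hg' : rest.getD (v - (i + 1)) true = false := by
        have hvi : v - i = (v - (i + 1)) + 1 := by omega
        rwa [hvi, List.getD_eq_getElem?_getD, List.getElem?_cons_succ,
          ← List.getD_eq_getElem?_getD] at hg
      cases b
      · rw [playS]; exact playS_ex v hw rest (i + 1) _ ρ (by omega) hg'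
      · rw [playS]; exact playS_ex v hw rest (i + 1) _ ρ (by omega) hg'

lemma playS_agree : ∀ (rest : List Bool) (i : ℕ) (μ ρ₁ ρ₂ : ℕ → I.D) (v : ℕ),
    (∀ u, i ≤ u → u ≤ v → rest.getD (u - i) false = true → ρ₁ u = ρ₂ u) →
    playS I w rest i μ ρ₁ v = playS I w rest i μ ρ₂ v
  | [], _, _, _, _, _, _ => rfl
  | b :: rest, i, μ, ρ₁, ρ₂, v, h => by
    by_cases hiv : i ≤ v
    · have hshift : ∀ u, i + 1 ≤ u → u ≤ v → rest.getD (u - (i + 1)) false = true →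
          ρ₁ u = ρ₂ u := by
        intro u h1 h2 hg
        refine h u (by omega) h2 ?_
        have hui : u - i = (u - (i + 1)) + 1 := by omega
        rwa [hui, List.getD_eq_getElem?_getD, List.getElem?_cons_succ,
          ← List.getD_eq_getElem?_getD]
      cases b
      · rw [playS, playS]
        exact playS_agree rest (i + 1) _ ρ₁ ρ₂ v hshift
      · have he : ρ₁ i = ρ₂ i := h i le_rfl hiv (by simp)
        rw [playS, playS, he]
        exact playS_agree rest (i + 1) _ ρ₁ ρ₂ v hshift
    · cases b
      · rw [playS, playS, playS_lt rest (i + 1) _ ρ₁ v (by omega),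
          playS_lt rest (i + 1) _ ρ₂ v (by omega)]
      · rw [playS, playS, playS_lt rest (i + 1) _ ρ₁ v (by omega),
          playS_lt rest (i + 1) _ ρ₂ v (by omega),
          Function.update_of_ne (show v ≠ i by omega),
          Function.update_of_ne (show v ≠ i by omega)]

/-- Winning strategies yield classical satisfaction. -/
lemma holds_of_playS (P : Formula S) : ∀ (rest : List Bool) (i : ℕ) (μ : ℕ → I.D),
    (∀ ρ, P.val I (playS I w rest i μ ρ) = 1) → holds I P rest i μ
  | [], i, μ, h => h μ
  | true :: rest, i, μ, h => by
    show ∀ d, holds I P rest (i + 1) (Function.update μ i d)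
    intro d
    refine holds_of_playS P rest (i + 1) _ fun ρ => ?_
    have hh := h (Function.update ρ i d)
    rw [playS, Function.update_self] at hh
    rwa [playS_congr_ρ rest (i + 1) _ (Function.update ρ i d) ρ
      (fun u hu => Function.update_of_ne (by omega) _ _)] at hh
  | false :: rest, i, μ, h => by
    show ∃ d, holds I P rest (i + 1) (Function.update μ i d)
    refine ⟨w i μ, holds_of_playS P rest (i + 1) _ fun ρ => ?_⟩
    have hh := h ρ
    rwa [playS] at hh

/-- Transport of `holds` along an equality of prefixes. -/
lemma holds_congr_list {I : Interp S} {P : Formula S} {l l' : List Bool} (e : l = l')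
    {i : ℕ} {μ : ℕ → I.D} (h : holds I P l i μ) : holds I P l' i μ := e ▸ h

open Classical in
/-- The choice-based existential witness strategy. -/
noncomputable def eWit (I : Interp S) (P : Formula S) (pref : List Bool) :
    ℕ → (ℕ → I.D) → I.D := fun i μ =>
  if h : ∃ d, holds I P (pref.drop (i + 1)) (i + 1) (Function.update μ i d) then h.choose
  else Classical.choice I.dNe

/-- Classical satisfaction yields that the choice strategy wins every play. -/
lemma playS_eWit_val (I : Interp S) (P : Formula S) (pref : List Bool) :
    ∀ (rest : List Bool) (i : ℕ) (μ : ℕ → I.D), pref.drop i = rest →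
      holds I P rest i μ →
      ∀ ρ, P.val I (playS I (eWit I P pref) rest i μ ρ) = 1
  | [], i, μ, hdrop, hh, ρ => hh
  | true :: rest, i, μ, hdrop, hh, ρ => by
    have hdrop' : pref.drop (i + 1) = rest := by
      rw [← List.drop_drop, hdrop]; rfl
    rw [playS]
    exact playS_eWit_val I P pref rest (i + 1) _ hdrop' (hh (ρ i)) ρ
  | false :: rest, i, μ, hdrop, hh, ρ => by
    have hdrop' : pref.drop (i + 1) = rest := by
      rw [← List.drop_drop, hdrop]; rfl
    rw [playS]
    obtain ⟨d, hd⟩ := hh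
    have hcond : ∃ d, holds I P (pref.drop (i + 1)) (i + 1) (Function.update μ i d) :=
      ⟨d, holds_congr_list hdrop'.symm hd⟩
    have hspec : holds I P rest (i + 1) (Function.update μ i hcond.choose) :=
      holds_congr_list hdrop' hcond.choose_spec
    have he : eWit I P pref i μ = hcond.choose := by
      simp only [eWit]
      exact dif_pos hcond
    rw [he]
    exact playS_eWit_val I P pref rest (i + 1) _ hdrop' hspec ρ

end SkolemAux

namespace SkolemAux

variable {S : Signature}

/-- Reconstruct an assignment of the universal variables in `L` from a tuple `g`. -/
noncomputable def ρof (I : Interp S) (L : List ℕ) (g : ℕ → I.D) : ℕ → I.D :=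
  fun v => if v ∈ L then g (L.idxOf v) else Classical.choice I.dNe

/-- The value of the Skolem function for the existential variable `i`. -/
noncomputable def skVal (I : Interp S) (P : Formula S) (pref : List Bool) (μ0 : ℕ → I.D)
    (i : ℕ) (g : ℕ → I.D) : I.D :=
  playS I (eWit I P pref) pref 0 μ0 (ρof I (univPos (pref.take i)) g) i

open Classical in
/-- The Skolemized interpretation of the function symbols. -/
noncomputable def skFI (I : Interp S) (P : Formula S) (pref : List Bool) (μ0 : ℕ → I.D)
    (sk : ℕ → S.Func) : ∀ f : S.Func, (Fin (S.fArity f) → I.D) → I.D := fun f args =>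
  if h : ∃ i, i ∈ exPos pref ∧ sk i = f then
    skVal I P pref μ0 h.choose
      (fun j => if hj : j < S.fArity f then args ⟨j, hj⟩ else Classical.choice I.dNe)
  else I.fI f args

lemma skFI_eq (I : Interp S) (P : Formula S) (pref : List Bool) (μ0 : ℕ → I.D)
    (sk : ℕ → S.Func)
    (hinj : ∀ i ∈ exPos pref, ∀ j ∈ exPos pref, sk i = sk j → i = j)
    {v : ℕ} (hv : v ∈ exPos pref) (args : Fin (S.fArity (sk v)) → I.D) :
    skFI I P pref μ0 sk (sk v) args =
      skVal I P pref μ0 v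
        (fun j => if hj : j < S.fArity (sk v) then args ⟨j, hj⟩ else Classical.choice I.dNe) := by
  have hcond : ∃ i, i ∈ exPos pref ∧ sk i = sk v := ⟨v, hv, rfl⟩
  have hch : hcond.choose = v :=
    hinj _ hcond.choose_spec.1 v hv hcond.choose_spec.2
  simp only [skFI]
  rw [dif_pos hcond, hch]

lemma skFI_fresh (I : Interp S) (P : Formula S) (pref : List Bool) (μ0 : ℕ → I.D)
    (sk : ℕ → S.Func) {f : S.Func} (hf : ¬ ∃ i, i ∈ exPos pref ∧ sk i = f) :
    skFI I P pref μ0 sk f = I.fI f := by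
  funext args
  simp only [skFI]
  rw [dif_neg hf]

/-- Congruence for the evaluation of a Skolem term. -/
lemma skTerm_eval_congr (I : Interp S) (pref : List Bool) (sk : ℕ → S.Func) {v : ℕ}
    (hvex : v ∈ exPos pref)
    (harv : S.fArity (sk v) = (univPos (pref.take v)).length)
    (μ₁ μ₂ : ℕ → I.D) (h : ∀ u ∈ univPos (pref.take v), μ₁ u = μ₂ u) :
    (skSubstSatStd pref sk v).eval I μ₁ = (skSubstSatStd pref sk v).eval I μ₂ := by
  have hex : pref.getD v true = false := mem_exPos.1 hvex
  simp only [skSubstSatStd]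
  rw [if_pos hex]
  show I.fI (sk v) _ = I.fI (sk v) _
  congr 1
  funext j
  show μ₁ _ = μ₂ _
  refine h _ (mem_of_getD ?_)
  rw [← harv]
  exact j.isLt

/-- Elements of the the universal-positions list of a take are below the cut. -/
lemma univPos_take_lt {pref : List Bool} {v u : ℕ} (h : u ∈ univPos (pref.take v)) :
    u < v := (mem_univPos_take.1 h).1

end SkolemAux

/-- standard Skolemization preserves 1-satisfiability for △-guarded prenex
formulas `Q x̄ △B` (`B` quantifier free): `Q x̄ △B` is 1-satisfiable iff `∀x̄' △B^S` is,
where the Skolem function symbols `sk i` are fresh (pairwise distinct, not occurring in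
`B`) and of the correct arity. -/
theorem delta_guarded_standard_skolemization_sat (S : Signature)
    (pref : List Bool) (B : Formula S) (hQF : B.isQF)
    (hvars : ∀ v ∈ B.freeVars, v < pref.length)
    (sk : ℕ → S.Func)
    (harity : ∀ i ∈ exPos pref, S.fArity (sk i) = (univPos (List.take i pref)).length)
    (hfresh : ∀ i ∈ exPos pref, sk i ∉ B.funcsIn)
    (hinj : ∀ i ∈ exPos pref, ∀ j ∈ exPos pref, sk i = sk j → i = j) :
    sat1 (buildPrenex pref 0 (Formula.delta B)) ↔
      sat1 (allCloseList (univPos pref)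
        (Formula.delta (B.subst (skSubstSatStd pref sk)))) := by
  classical
  constructor
  · -- Skolemization: from a model of the prenex formula build a model of the Skolem form
    rintro ⟨I, μ0, hval⟩
    have h2 : ∀ ν : ℕ → I.D, (Formula.delta B).val I ν = 0 ∨ (Formula.delta B).val I ν = 1 :=
      SkolemAux.delta_twoval B I
    have hholds : SkolemAux.holds I (Formula.delta B) pref 0 μ0 :=
      (SkolemAux.buildPrenex_val_one I (Formula.delta B) h2 pref 0 μ0).mp hval
    have hplay : ∀ ρ, (Formula.delta B).val I
        (SkolemAux.playS I (SkolemAux.eWit I (Formula.delta B) pref) pref 0 μ0 ρ) = 1 :=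
      fun ρ =>
        SkolemAux.playS_eWit_val I (Formula.delta B) pref pref 0 μ0 rfl hholds ρ
    refine ⟨⟨I.D, I.dNe, SkolemAux.skFI I (Formula.delta B) pref μ0 sk, I.pI⟩, μ0, ?_⟩
    rw [SkolemAux.allCloseList_val_one]
    intro ν _
    show gdelta ((B.subst (skSubstSatStd pref sk)).val
      (⟨I.D, I.dNe, SkolemAux.skFI I (Formula.delta B) pref μ0 sk, I.pI⟩ : Interp S) ν) = 1
    rw [SkolemAux.fval_subst _ _ ν B hQF]
    have key : B.val
        (⟨I.D, I.dNe, SkolemAux.skFI I (Formula.delta B) pref μ0 sk, I.pI⟩ : Interp S)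
        (fun v => (skSubstSatStd pref sk v).eval
          (⟨I.D, I.dNe, SkolemAux.skFI I (Formula.delta B) pref μ0 sk, I.pI⟩ : Interp S) ν)
        = B.val I (SkolemAux.playS I (SkolemAux.eWit I (Formula.delta B) pref) pref 0 μ0 ν) := by
      refine SkolemAux.fval_congr I _ _ _ B hQF ?_ ?_
      · -- agreement on the function symbols of B
        intro f hf
        refine SkolemAux.skFI_fresh I (Formula.delta B) pref μ0 sk ?_
        rintro ⟨i, hi, rfl⟩
        exact hfresh i hi hf
      · -- agreement on the free variables of B
        intro v hv
        have hvn : v < pref.length := hvars v hv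
        by_cases hex : pref.getD v true = false
        · -- existential variable
          have hvex : v ∈ exPos pref := SkolemAux.mem_exPos.2 hex
          show (skSubstSatStd pref sk v).eval _ ν = _
          simp only [skSubstSatStd]
          rw [if_pos hex]
          show SkolemAux.skFI I (Formula.delta B) pref μ0 sk (sk v)
            (fun j => ν ((univPos (pref.take v)).getD (j : ℕ) 0)) = _
          rw [SkolemAux.skFI_eq I (Formula.delta B) pref μ0 sk hinj hvex]
          simp only [SkolemAux.skVal]
          refine SkolemAux.playS_agree pref 0 μ0 _ ν v ?_
          intro u _ huv hg
          have hgu : pref.getD u false = true := by simpa using hg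
          have hune : u ≠ v := by
            intro h
            rw [h, ← SkolemAux.getD_tf hvn, hex] at hgu
            simp at hgu
          have huL : u ∈ univPos (pref.take v) :=
            SkolemAux.mem_univPos_take.2 ⟨by omega, hgu⟩
          have hidx : (univPos (pref.take v)).idxOf u < (univPos (pref.take v)).length :=
            List.idxOf_lt_length_iff.2 huL
          have hidx' : (univPos (pref.take v)).idxOf u < S.fArity (sk v) := by
            rw [harity v hvex]
            exact hidx
          simp only [SkolemAux.ρof]
          rw [if_pos huL, dif_pos hidx']
          rw [SkolemAux.getD_indexOf huL]
        · -- universal variable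
          show (skSubstSatStd pref sk v).eval _ ν = _
          simp only [skSubstSatStd]
          rw [if_neg hex]
          show ν v = _
          have hguniv : pref.getD v false = true := by
            rw [← SkolemAux.getD_tf hvn]
            revert hex
            cases pref.getD v true <;> simp
          exact (SkolemAux.playS_univ pref 0 μ0 ν v (by omega) (by simpa using hguniv)).symm
    rw [key]
    exact hplay ν
  · -- De-Skolemization: a model of the Skolem form is a model of the prenex formula
    rintro ⟨I, μ', hval⟩
    refine ⟨I, μ', ?_⟩
    have h2 : ∀ ν : ℕ → I.D, (Formula.delta B).val I ν = 0 ∨ (Formula.delta B).val I ν = 1 :=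
      SkolemAux.delta_twoval B I
    rw [SkolemAux.buildPrenex_val_one I (Formula.delta B) h2 pref 0 μ']
    set w : ℕ → (ℕ → I.D) → I.D :=
      fun i νv => (skSubstSatStd pref sk i).eval I νv with hwdef
    refine SkolemAux.holds_of_playS (w := w) (Formula.delta B) pref 0 μ' ?_
    intro ρ
    set μfin : ℕ → I.D := SkolemAux.playS I w pref 0 μ' ρ with hμfin
    set ν : ℕ → I.D := fun u => if pref.getD u false = true then μfin u else μ' u with hν
    have hνoff : ∀ v, v ∉ univPos pref → ν v = μ' v := by
      intro v hv
      rw [hν]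
      exact if_neg (fun h => hv (SkolemAux.mem_univPos.2 h))
    have h1 := (SkolemAux.allCloseList_val_one I _ (univPos pref) μ').mp hval ν hνoff
    have h1' : gdelta ((B.subst (skSubstSatStd pref sk)).val I ν) = 1 := h1
    rw [SkolemAux.fval_subst I _ ν B hQF] at h1'
    show gdelta (B.val I μfin) = 1
    have hagree : ∀ v ∈ B.freeVars, μfin v = (skSubstSatStd pref sk v).eval I ν := by
      intro v hv
      have hvn : v < pref.length := hvars v hv
      by_cases hex : pref.getD v true = false
      · -- existential variable
        have hvex : v ∈ exPos pref := SkolemAux.mem_exPos.2 hex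
        have hw : ∀ μ₁ μ₂ : ℕ → I.D, (∀ u, u < v → μ₁ u = μ₂ u) → w v μ₁ = w v μ₂ := by
          intro μ₁ μ₂ hagr
          exact SkolemAux.skTerm_eval_congr I pref sk hvex (harity v hvex) μ₁ μ₂
            (fun u hu => hagr u (SkolemAux.univPos_take_lt hu))
        have hfin : μfin v = w v μfin :=
          SkolemAux.playS_ex v hw pref 0 μ' ρ (by omega) (by simpa using hex)
        rw [hfin]
        show (skSubstSatStd pref sk v).eval I μfin = (skSubstSatStd pref sk v).eval I ν
        refine SkolemAux.skTerm_eval_congr I pref sk hvex (harity v hvex) μfin ν ?_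
        intro u hu
        have hgu : pref.getD u false = true := (SkolemAux.mem_univPos_take.1 hu).2
        simp only [hν]
        rw [if_pos hgu]
      · -- universal variable
        have hguniv : pref.getD v false = true := by
          rw [← SkolemAux.getD_tf hvn]
          revert hex
          cases pref.getD v true <;> simp
        have : (skSubstSatStd pref sk v).eval I ν = ν v := by
          simp only [skSubstSatStd]
          rw [if_neg hex]
          rfl
        rw [this]
        simp only [hν]
        rw [if_pos hguniv]
    have hBval : B.val I μfin = B.val I (fun v => (skSubstSatStd pref sk v).eval I ν) :=
      SkolemAux.fval_congr I I.fI μfin _ B hQF (fun f _ => rfl) hagree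
    rw [hBval]
    exact h1'
end

section
/- For every quantifier-free formula A of first-order Gödel logic with △ with free variables x̄: ∃x̄ A is valid if and only if ∃x̄ △A is valid. -/
/-! ### Auxiliary lemmas -/

namespace GdAux

lemma ui_le_one (a : unitInterval) : a ≤ 1 := a.2.2

lemma gdelta_le (a : unitInterval) : gdelta a ≤ a := by
  unfold gdelta; split
  · simp_all
  · exact a.2.1

/-- The squashing map: `1 ↦ 1`, `a ↦ a/2` otherwise. -/
noncomputable def h (a : unitInterval) : unitInterval :=
  if a = 1 then 1 else ⟨a / 2, ⟨div_nonneg a.2.1 (by norm_num), by nlinarith [a.2.2]⟩⟩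

lemma h_one : h 1 = 1 := by simp [h]

lemma h_coe_of_ne {a : unitInterval} (ha : a ≠ 1) : (h a : ℝ) = a / 2 := by
  simp [h, ha]

lemma h_le_half {a : unitInterval} (ha : a ≠ 1) : (h a : ℝ) ≤ 1 / 2 := by
  rw [h_coe_of_ne ha]; nlinarith [a.2.2]

lemma h_zero : h 0 = 0 := by
  have h01 : (0 : unitInterval) ≠ 1 := by
    intro hc
    have := congrArg (Subtype.val) hc
    norm_num at this
  apply Subtype.ext
  rw [h_coe_of_ne h01]
  norm_num

lemma h_eq_one_iff {a : unitInterval} : h a = 1 ↔ a = 1 := by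
  constructor
  · intro hc
    by_contra ha
    have := h_le_half ha
    rw [hc] at this
    norm_num at this
  · intro ha; rw [ha, h_one]

lemma h_strictMono : StrictMono h := by
  intro a b hab
  by_cases hb : b = 1
  · subst hb
    have ha : a ≠ 1 := ne_of_lt hab
    have : (h a : ℝ) < 1 := lt_of_le_of_lt (h_le_half ha) (by norm_num)
    rw [h_one]
    exact this
  · have ha : a ≠ 1 := by
      intro hc; subst hc
      exact absurd hab (not_lt.mpr (ui_le_one b))
    have : (h a : ℝ) < (h b : ℝ) := by
      rw [h_coe_of_ne ha, h_coe_of_ne hb]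
      have : (a : ℝ) < b := hab
      linarith
    exact this

lemma h_mono : Monotone h := h_strictMono.monotone

lemma h_min (a b : unitInterval) : h (min a b) = min (h a) (h b) :=
  h_mono.map_min

lemma h_max (a b : unitInterval) : h (max a b) = max (h a) (h b) :=
  h_mono.map_max

lemma h_gimp (a b : unitInterval) : h (gimp a b) = gimp (h a) (h b) := by
  unfold gimp
  by_cases hab : a ≤ b
  · simp [hab, h_mono hab, h_one]
  · have hba : b < a := lt_of_not_ge hab
    have : ¬ h a ≤ h b := not_le.mpr (h_strictMono hba)
    simp [hab, this]

lemma h_gdelta (a : unitInterval) : h (gdelta a) = gdelta (h a) := by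
  unfold gdelta
  by_cases ha : a = 1
  · simp [ha, h_one]
  · have : h a ≠ 1 := fun hc => ha (h_eq_one_iff.mp hc)
    simp [ha, this, h_zero]

/-- The interpretation with predicate values squashed by `h`. -/
noncomputable def liftI {S : Signature} (I : Interp S) : Interp S :=
  ⟨I.D, I.dNe, I.fI, fun p d => h (I.pI p d)⟩

lemma eval_lift {S : Signature} (I : Interp S) (μ : ℕ → I.D) (t : Term S) :
    Term.eval (liftI I) μ t = Term.eval I μ t := by
  induction t with
  | var n => rfl
  | func f args ih =>
      simp only [Term.eval, liftI]
      congr 1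
      funext i
      exact ih i

lemma val_lift {S : Signature} (I : Interp S) (μ : ℕ → I.D) (A : Formula S)
    (hQF : A.isQF) : A.val (liftI I) μ = h (A.val I μ) := by
  induction A generalizing μ with
  | bot => simp [Formula.val, h_zero]
  | top => simp [Formula.val, h_one]
  | atom p args =>
      simp only [Formula.val]
      exact congrArg (fun e => h (I.pI p e)) (funext fun i => eval_lift I μ (args i))
  | and A B ihA ihB =>
      simp only [Formula.val, ihA μ hQF.1, ihB μ hQF.2, h_min]
  | or A B ihA ihB =>
      simp only [Formula.val, ihA μ hQF.1, ihB μ hQF.2, h_max]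
  | imp A B ihA ihB =>
      simp only [Formula.val, ihA μ hQF.1, ihB μ hQF.2, h_gimp]
  | delta A ihA =>
      simp only [Formula.val, ihA μ hQF, h_gdelta]
  | all x A ih => exact hQF.elim
  | ex x A ih => exact hQF.elim

lemma eval_congr {S : Signature} (I : Interp S) {μ ν : ℕ → I.D} (t : Term S)
    (hm : ∀ n ∈ t.vars, μ n = ν n) : Term.eval I μ t = Term.eval I ν t := by
  induction t with
  | var n => exact hm n (by simp [Term.vars])
  | func f args ih =>
      simp only [Term.eval]
      congr 1
      funext i
      exact ih i (fun n hn => hm n (by simp [Term.vars]; exact ⟨i, hn⟩))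

lemma val_congr {S : Signature} (I : Interp S) (A : Formula S) :
    ∀ {μ ν : ℕ → I.D}, (∀ n ∈ A.freeVars, μ n = ν n) → A.val I μ = A.val I ν := by
  induction A with
  | bot => intro μ ν _; rfl
  | top => intro μ ν _; rfl
  | atom p args =>
      intro μ ν hm
      simp only [Formula.val]
      congr 1
      funext i
      exact eval_congr I (args i) (fun n hn => hm n (by simp [Formula.freeVars]; exact ⟨i, hn⟩))
  | and A B ihA ihB =>
      intro μ ν hm
      simp only [Formula.val,
        ihA (fun n hn => hm n (Or.inl hn)), ihB (fun n hn => hm n (Or.inr hn))]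
  | or A B ihA ihB =>
      intro μ ν hm
      simp only [Formula.val,
        ihA (fun n hn => hm n (Or.inl hn)), ihB (fun n hn => hm n (Or.inr hn))]
  | imp A B ihA ihB =>
      intro μ ν hm
      simp only [Formula.val,
        ihA (fun n hn => hm n (Or.inl hn)), ihB (fun n hn => hm n (Or.inr hn))]
  | delta A ihA =>
      intro μ ν hm
      simp only [Formula.val, ihA hm]
  | all x A ihA =>
      intro μ ν hm
      simp only [Formula.val]
      congr 1
      funext d
      apply ihA
      intro n hn
      by_cases hnx : n = x
      · subst hnx; simp
      · simp only [Function.update_of_ne hnx]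
        exact hm n ⟨hn, hnx⟩
  | ex x A ihA =>
      intro μ ν hm
      simp only [Formula.val]
      congr 1
      funext d
      apply ihA
      intro n hn
      by_cases hnx : n = x
      · subst hnx; simp
      · simp only [Function.update_of_ne hnx]
        exact hm n ⟨hn, hnx⟩

lemma exClose_le {S : Signature} (I : Interp S) (A : Formula S) (c : unitInterval)
    (hA : ∀ μ', A.val I μ' ≤ c) :
    ∀ (xs : List ℕ) (μ : ℕ → I.D), (exCloseList xs A).val I μ ≤ c := by
  intro xs
  induction xs with
  | nil => intro μ; exact hA μ
  | cons x xs ih =>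
      intro μ
      simp only [exCloseList, Formula.val]
      exact iSup_le (fun d => ih _)

lemma le_exClose {S : Signature} (I : Interp S) (A : Formula S) :
    ∀ (xs : List ℕ) (μ μ' : ℕ → I.D), (∀ n, n ∉ xs → μ' n = μ n) →
      A.val I μ' ≤ (exCloseList xs A).val I μ := by
  intro xs
  induction xs with
  | nil =>
      intro μ μ' hagree
      have : μ' = μ := funext (fun n => hagree n (by simp))
      rw [this]
      exact le_refl _
  | cons x xs ih =>
      intro μ μ' hagree
      simp only [exCloseList, Formula.val]
      refine le_trans (ih (Function.update μ x (μ' x)) μ' ?_)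
        (le_iSup (fun d => (exCloseList xs A).val I (Function.update μ x d)) (μ' x))
      intro n hn
      by_cases hnx : n = x
      · subst hnx; simp
      · rw [Function.update_of_ne hnx]
        exact hagree n (by simp [hnx, hn])

lemma exClose_mono {S : Signature} (I : Interp S) (A B : Formula S)
    (hAB : ∀ μ', A.val I μ' ≤ B.val I μ') :
    ∀ (xs : List ℕ) (μ : ℕ → I.D),
      (exCloseList xs A).val I μ ≤ (exCloseList xs B).val I μ := by
  intro xs
  induction xs with
  | nil => intro μ; exact hAB μ
  | cons x xs ih =>
      intro μ
      simp only [exCloseList, Formula.val]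
      exact iSup_mono (fun d => ih _)

end GdAux

/-- for a quantifier-free formula `A` with free variables among
`x₀,…,x_{k-1}`, the formula `∃x̄ A` is valid iff `∃x̄ △A` is valid. -/
theorem valid_exists_iff_valid_exists_delta (S : Signature) (A : Formula S)
    (hQF : A.isQF) (k : ℕ) (hvars : ∀ v ∈ A.freeVars, v < k) :
    valid (exCloseList (List.range k) A) ↔
      valid (exCloseList (List.range k) (Formula.delta A)) := by
  open GdAux in
  constructor
  · intro hval I μ
    -- find a witness assignment where `A` takes value `1`
    have hwit : ∃ μ' : ℕ → I.D, A.val I μ' = 1 := by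
      by_contra hno
      push_neg at hno
      have hle : ∀ μ' : ℕ → I.D, A.val (liftI I) μ' ≤ ⟨1/2, by norm_num, by norm_num⟩ := by
        intro μ'
        rw [val_lift I μ' A hQF]
        exact h_le_half (hno μ')
      have h1 := hval (liftI I) μ
      have h2 := exClose_le (liftI I) A _ hle (List.range k) μ
      rw [h1] at h2
      have : (1:ℝ) ≤ 1/2 := h2
      norm_num at this
    obtain ⟨μ', hμ'⟩ := hwit
    set μ'' : ℕ → I.D := fun n => if n < k then μ' n else μ n with hμ''def
    have hAval : A.val I μ'' = 1 := by
      rw [val_congr I A (ν := μ') (fun n hn => by simp [hμ''def, hvars n hn])]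
      exact hμ'
    have hdval : (Formula.delta A).val I μ'' = 1 := by
      simp [Formula.val, gdelta, hAval]
    have := le_exClose I (Formula.delta A) (List.range k) μ μ''
      (fun n hn => by simp [hμ''def]; intro hk; exact absurd (List.mem_range.mpr hk) hn)
    rw [hdval] at this
    exact le_antisymm (ui_le_one _) this
  · intro hval I μ
    have hm := exClose_mono I (Formula.delta A) A
      (fun μ' => by simpa [Formula.val] using gdelta_le (A.val I μ')) (List.range k) μ
    rw [hval I μ] at hm
    exact le_antisymm (ui_le_one _) hm
end

section
/- Standard Skolemization for satisfiability fails in G△: (a) there exist a nonempty type D and a function f : D → [0,1] such that min(⨆ d, f d, ⨅ d, ¬△(f d)) = 1 (i.e., the formula ∃x p(x) ∧ ∀y ¬△p(y) is 1-satisfiable); but (b) for every nonempty type D, every f : D → [0,1] and every c ∈ D, min(f c, ⨅ d, ¬△(f d)) < 1 (i.e., its standard Skolemized form p(c) ∧ ∀y ¬△p(y) is not 1-satisfiable). -/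
/-- Gödel negation on `[0,1]`. -/
noncomputable def gneg (a : unitInterval) : unitInterval := gimp a 0

lemma gneg_gdelta_of_ne_one {a : unitInterval} (h : a ≠ 1) : gneg (gdelta a) = 1 := by
  simp [gdelta, h, gneg, gimp]

noncomputable def myf (n : ℕ) : unitInterval :=
  ⟨1 - 1/(n+1), by
    constructor
    · have h1 : (1:ℝ)/(n+1) ≤ 1 := by
        rw [div_le_one (by positivity)]
        linarith [Nat.cast_nonneg (α := ℝ) n]
      linarith
    · have : (0:ℝ) < 1/(n+1) := by positivity
      linarith⟩

lemma myf_lt_one (n : ℕ) : myf n < 1 := by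
  rw [← Subtype.coe_lt_coe]
  show (1:ℝ) - 1/(n+1) < 1
  have : (0:ℝ) < 1/(n+1) := by positivity
  linarith

/-- `∃x p(x) ∧ ∀y ¬△p(y)` is 1-satisfiable, but its standard Skolemized
form `p(c) ∧ ∀y ¬△p(y)` is not. -/
theorem standard_sat_skolemization_fails :
    (∃ (D : Type) (_ : Nonempty D) (f : D → unitInterval),
      min (⨆ d, f d) (⨅ d, gneg (gdelta (f d))) = 1) ∧
    (∀ (D : Type) [Nonempty D] (f : D → unitInterval) (c : D),
      min (f c) (⨅ d, gneg (gdelta (f d))) < 1) := by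
  constructor
  · refine ⟨ℕ, ⟨0⟩, myf, ?_⟩
    have hinf : (⨅ d, gneg (gdelta (myf d))) = 1 := by
      simp only [gneg_gdelta_of_ne_one (ne_of_lt (myf_lt_one _))]
      exact iInf_const
    have hsup : (⨆ d, myf d) = 1 := by
      rw [show (1 : unitInterval) = ⊤ from rfl, iSup_eq_top]
      intro b hb
      have hb' : (b : ℝ) < 1 := hb
      obtain ⟨n, hn⟩ := exists_nat_gt (1/(1 - (b:ℝ)))
      refine ⟨n, ?_⟩
      rw [← Subtype.coe_lt_coe]
      show (b:ℝ) < 1 - 1/(n+1)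
      have h1 : (0:ℝ) < 1 - b := by linarith
      have h2 : (0:ℝ) < (n:ℝ)+1 := by positivity
      rw [div_lt_iff₀ h1] at hn
      have : (1:ℝ)/(n+1) < 1 - b := by
        rw [div_lt_iff₀ h2]
        nlinarith
      linarith
    rw [hinf, hsup, min_self]
  · intro D _ f c
    by_cases hc : f c = 1
    · have : (⨅ d, gneg (gdelta (f d))) ≤ gneg (gdelta (f c)) := iInf_le _ c
      have hz : gneg (gdelta (f c)) = 0 := by simp [hc, gdelta, gneg, gimp]
      calc min (f c) (⨅ d, gneg (gdelta (f d))) ≤ (⨅ d, gneg (gdelta (f d))) := min_le_right _ _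
        _ ≤ 0 := hz ▸ this
        _ < 1 := by
            rw [← Subtype.coe_lt_coe]; norm_num
    · calc min (f c) (⨅ d, gneg (gdelta (f d))) ≤ f c := min_le_left _ _
        _ < 1 := lt_of_le_of_ne unitInterval.le_one' hc
end

section
/- Standard Skolemization for validity fails in (non-prenex) Gödel logic: (a) there exist a nonempty type D and a function f : D → [0,1] such that (⨅ d, ¬¬(f d)) ⇨ ¬¬(⨅ d, f d) < 1 (i.e., the formula ∀x ¬¬A(x) → ¬¬∀x A(x) is not valid); but (b) for every nonempty type D, every f : D → [0,1] and every c ∈ D, (⨅ d, ¬¬(f d)) ⇨ ¬¬(f c) = 1 (i.e., its standard Skolemized version ∀x ¬¬A(x) → ¬¬A(c) is valid). -/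
lemma gneg_gneg (a : unitInterval) : gneg (gneg a) = if a = 0 then 0 else 1 := by
  unfold gneg gimp
  by_cases h : a = 0
  · simp [h]
  · have h' : ¬ a ≤ 0 := fun hle => h (le_antisymm hle a.2.1)
    simp [h', h]

/-- `∀x ¬¬A(x) → ¬¬∀x A(x)` is not valid in Gödel logic, but its standard
Skolemized version `∀x ¬¬A(x) → ¬¬A(c)` is valid. -/
theorem standard_val_skolemization_fails_nonprenex :
    (∃ (D : Type) (_ : Nonempty D) (f : D → unitInterval),
      gimp (⨅ d, gneg (gneg (f d))) (gneg (gneg (⨅ d, f d))) < 1) ∧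
    (∀ (D : Type) [Nonempty D] (f : D → unitInterval) (c : D),
      gimp (⨅ d, gneg (gneg (f d))) (gneg (gneg (f c))) = 1) := by
  constructor
  · refine ⟨ℕ, ⟨0⟩, fun n => ⟨1/(n+1), by positivity, by
      rw [div_le_one (by positivity)]; linarith [Nat.cast_nonneg (α := ℝ) n]⟩, ?_⟩
    set f : ℕ → unitInterval := fun n => ⟨1/(n+1), by positivity, by
      rw [div_le_one (by positivity)]; linarith [Nat.cast_nonneg (α := ℝ) n]⟩ with hf
    have hfne : ∀ n, f n ≠ 0 := by
      intro n h
      have : (1:ℝ)/(n+1) = 0 := congrArg Subtype.val h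
      have h2 : (0:ℝ) < 1/(n+1) := by positivity
      linarith
    have h1 : (⨅ d, gneg (gneg (f d))) = 1 := by
      have : ∀ d, gneg (gneg (f d)) = 1 := fun d => by rw [gneg_gneg]; simp [hfne d]
      simp [this]
    have h2 : (⨅ d, f d) = 0 := by
      apply le_antisymm _ (zero_le')
      by_contra hlt
      push_neg at hlt
      have hpos : (0:ℝ) < (⨅ d, f d : unitInterval) := hlt
      obtain ⟨n, hn⟩ := exists_nat_one_div_lt hpos
      have := iInf_le f n
      have hc : ((⨅ d, f d : unitInterval) : ℝ) ≤ 1/(n+1) := this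
      linarith
    rw [h1, h2, gneg_gneg]
    have hns : ¬ ((1:unitInterval) ≤ 0) := by
      intro h
      have : (1:ℝ) ≤ 0 := h
      linarith
    rw [if_pos rfl, gimp, if_neg hns]
    exact lt_of_le_of_ne zero_le' (fun h => hns (le_of_eq h.symm))
  · intro D _ f c
    by_cases h : f c = 0
    · have hle : (⨅ d, gneg (gneg (f d))) ≤ 0 := by
        refine le_trans (iInf_le _ c) ?_
        rw [gneg_gneg]; simp [h]
      rw [gimp, if_pos (le_trans hle (by rw [gneg_gneg]; simp [h]))]
    · have : gneg (gneg (f c)) = 1 := by rw [gneg_gneg]; simp [h]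
      rw [this, gimp, if_pos unitInterval.le_one']
end

section
/- (a) For every nonempty type D and every f : D → [0,1], ⨆ x, ⨅ y, (△(f y) ⇨ f x) = 1 (i.e., the formula ∃x ∀y (△p(y) → p(x)) is valid in G△); and (b) there exist a nonempty type D and f : D → [0,1] such that ⨆ x, ⨅ y, (f y ⇨ f x) < 1 (i.e., removing the occurrence of △ results in a formula that is not valid in G△, although it is classically valid). -/
noncomputable def gf (n : ℕ) : unitInterval :=
  ⟨1/2 - 1/(n+2), by
    constructor
    · have hn : (0:ℝ) ≤ (n:ℝ) := Nat.cast_nonneg n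
      have h2 : (2:ℝ) ≤ (n:ℝ) + 2 := by linarith
      have : 1/((n:ℝ)+2) ≤ 1/2 := by
        apply one_div_le_one_div_of_le <;> linarith
      linarith
    · have : (0:ℝ) < 1/((n:ℝ)+2) := by positivity
      linarith⟩

lemma gf_lt (n : ℕ) : gf n < gf (n+1) := by
  change (1/2 - 1/((n:ℝ)+2)) < 1/2 - 1/(((n+1:ℕ):ℝ)+2)
  have hc : ((n:ℝ)+1) = ((n+1:ℕ):ℝ) := by norm_cast
  rw [← hc]
  have : (1:ℝ)/((n:ℝ)+1+2) < 1/((n:ℝ)+2) := by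
    apply one_div_lt_one_div_of_lt <;> linarith
  linarith

lemma gf_le (n : ℕ) : (gf n : ℝ) ≤ 1/2 := by
  have : (0:ℝ) < 1/((n:ℝ)+2) := by positivity
  rw [gf]
  dsimp
  linarith

/-- `∃x ∀y (△p(y) → p(x))` is valid in G△, but removing the `△` yields a
formula that is not valid. -/
theorem delta_example_validity :
    (∀ (D : Type) [Nonempty D] (f : D → unitInterval),
      (⨆ x, ⨅ y, gimp (gdelta (f y)) (f x)) = 1) ∧
    (∃ (D : Type) (_ : Nonempty D) (f : D → unitInterval),
      (⨆ x, ⨅ y, gimp (f y) (f x)) < 1) := by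
  constructor
  · intro D _ f
    apply le_antisymm le_top
    by_cases h : ∃ x, f x = 1
    · obtain ⟨x, hx⟩ := h
      refine le_iSup_of_le x (le_iInf fun y => ?_)
      unfold gimp gdelta
      by_cases hy : f y = 1
      · simp [hy, hx]
        rfl
      · simp [hy]
        rfl
    · push_neg at h
      refine le_iSup_of_le (Classical.arbitrary D) (le_iInf fun y => ?_)
      unfold gimp gdelta
      simp [h y, unitInterval.nonneg']
      rfl
  · refine ⟨ℕ, inferInstance, gf, ?_⟩
    have hhalf : (⟨1/2, by norm_num⟩ : unitInterval) < 1 := by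
      rw [← Subtype.coe_lt_coe]; norm_num
    refine lt_of_le_of_lt (iSup_le fun x => ?_) hhalf
    refine le_trans (iInf_le _ (x+1)) ?_
    have hlt := gf_lt x
    have : gimp (gf (x+1)) (gf x) = gf x := by
      unfold gimp
      rw [if_neg (not_le.mpr hlt)]
    rw [this, ← Subtype.coe_le_coe]
    exact gf_le x
end

section
/- Correctness of the order-clause translation of implication definitions: for all a, b, c in [0,1], c = (a ⇨ b) if and only if all of the following hold: (a ≤ b or c ≤ b), (c = 1 or b < a), (c = 1 or c ≤ b), and b ≤ c. (This verifies that the value of △(C ↔ (A → B)) equals 1 exactly when the four order clauses {A ≤ B, C ≤ B}, {⊤ ≤ C, B < A}, {⊤ ≤ C, C ≤ B}, {B ≤ C} are all satisfied by the truth values a, b, c of A, B, C.) -/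
/-- correctness of the order-clause translation of implication definitions. -/
theorem order_clauses_imp (a b c : unitInterval) :
    c = gimp a b ↔
      (a ≤ b ∨ c ≤ b) ∧ (c = 1 ∨ b < a) ∧ (c = 1 ∨ c ≤ b) ∧ b ≤ c := by
  unfold gimp
  split
  · rename_i h
    constructor
    · rintro rfl
      exact ⟨Or.inl h, Or.inl rfl, Or.inl rfl, unitInterval.le_one'⟩
    · rintro ⟨_, h2, _, _⟩
      rcases h2 with rfl | h2
      · rfl
      · exact absurd h h2.not_ge
  · rename_i h
    push_neg at h
    constructor
    · rintro rfl
      exact ⟨Or.inr le_rfl, Or.inr h, Or.inr le_rfl, le_rfl⟩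
    · rintro ⟨h1, _, h3, h4⟩
      rcases h3 with rfl | h3
      · rcases h1 with h1 | h1
        · exact absurd h1 h.not_ge
        · exact le_antisymm (le_trans (unitInterval.le_one') h1) (unitInterval.le_one') |>.symm ▸ rfl
      · exact le_antisymm h3 h4
end
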